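/- arXiv:1711.03466 — 4 statements merged into one kernel-verified Lean document; each statement's English description precedes it below -/
import Mathlib

section
/- For α < 2, if s is a strong equilibrium of the network creation game, then the complement of G(s) contains no cycle, i.e., it is a forest. Equivalently: if the complement of G(s) contains a cycle of length k ≥ 3, then the coalition of players on that cycle can deviate (each buying one additional edge to the next player on the cycle) and strictly decrease each of their costs. -/
open SimpleGraph ENNReal Finset

/-- A strategy profile: each player chooses a set of other players. -/
abbrev Profile (n : ℕ) := Fin n → Finset (Fin n)

/-- Validity: no player buys an edge to herself. -/
def Valid {n : ℕ} (s : Profile n) : Prop := ∀ i, i ∉ s i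

/-- The graph formed by a strategy profile: `{i,j}` is an edge iff `j ∈ s i` or `i ∈ s j`. -/
def NCGraph {n : ℕ} (s : Profile n) : SimpleGraph (Fin n) :=
  SimpleGraph.fromRel (fun i j => j ∈ s i)

instance {n : ℕ} (s : Profile n) : DecidableRel (NCGraph s).Adj := fun i j =>
  decidable_of_iff (i ≠ j ∧ (j ∈ s i ∨ i ∈ s j))
    (SimpleGraph.fromRel_adj (fun a b => b ∈ s a) i j).symm

/-- Distance cost of player `i`: sum of (extended) distances to all players. -/
noncomputable def dCost {n : ℕ} (s : Profile n) (i : Fin n) : ℝ≥0∞ :=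
  ∑ j, ((NCGraph s).edist i j : ℝ≥0∞)

/-- Total cost of player `i` in the network creation game with parameter `α`. -/
noncomputable def cost {n : ℕ} (α : ℝ) (s : Profile n) (i : Fin n) : ℝ≥0∞ :=
  ENNReal.ofReal α * (s i).card + dCost s i

/-- Social cost: sum of all players' costs. -/
noncomputable def socialCost {n : ℕ} (α : ℝ) (s : Profile n) : ℝ≥0∞ :=
  ∑ i, cost α s i

/-- A profile is rational if no edge is bought by both of its endpoints. -/
def Rational {n : ℕ} (s : Profile n) : Prop := ∀ i j, j ∈ s i → i ∉ s j

/-- Pure Nash equilibrium. -/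
def IsNashEq {n : ℕ} (α : ℝ) (s : Profile n) : Prop :=
  ∀ (i : Fin n) (t : Finset (Fin n)), i ∉ t →
    cost α s i ≤ cost α (Function.update s i t) i

/-- Strong equilibrium: no nonempty coalition has a joint deviation strictly
decreasing every member's cost. -/
def IsStrongEq {n : ℕ} (α : ℝ) (s : Profile n) : Prop :=
  ∀ (K : Finset (Fin n)) (s' : Profile n), K.Nonempty → Valid s' →
    (∀ i ∉ K, s' i = s i) → ∃ i ∈ K, cost α s i ≤ cost α s' i

/-- A star graph: one center adjacent to all other vertices, and no other edges. -/
def IsStar {V : Type*} (G : SimpleGraph V) : Prop :=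
  ∃ c : V, ∀ i j : V, G.Adj i j ↔ i ≠ j ∧ (i = c ∨ j = c)

lemma ncg_adj {n : ℕ} (s : Profile n) (a b : Fin n) :
    (NCGraph s).Adj a b ↔ a ≠ b ∧ (b ∈ s a ∨ a ∈ s b) :=
  SimpleGraph.fromRel_adj _ a b

lemma ncg_mono {n : ℕ} {s t : Profile n} (h : ∀ i, s i ⊆ t i) : NCGraph s ≤ NCGraph t := by
  intro a b hab
  rw [ncg_adj] at hab ⊢
  exact ⟨hab.1, hab.2.imp (fun hm => h a hm) (fun hm => h b hm)⟩

lemma two_le_edist {V : Type*} {G : SimpleGraph V} {a b : V} (hne : a ≠ b)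
    (hadj : ¬ G.Adj a b) : 2 ≤ G.edist a b := by
  have h0 : G.edist a b ≠ 0 := by simp [SimpleGraph.edist_eq_zero_iff, hne]
  have h1 : G.edist a b ≠ 1 := by simp [SimpleGraph.edist_eq_one_iff_adj, hadj]
  generalize G.edist a b = d at *
  induction d using ENat.recTopCoe with
  | top => exact le_top
  | coe m =>
    norm_cast at h0 h1 ⊢
    omega

lemma cycle_tail_ne_nil {V : Type*} {G : SimpleGraph V} {v : V} {p : G.Walk v v}
    (hp : p.IsCycle) : p.support.tail ≠ [] := by
  have h3 := hp.three_le_length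
  have hl := p.length_support
  have hl2 : p.support.tail.length = p.length := by
    rw [p.support_eq_cons] at hl
    simpa using hl
  intro h
  rw [h] at hl2
  simp at hl2
  omega

lemma cycle_decomp {V : Type*} {G : SimpleGraph V} {v : V} {p : G.Walk v v}
    (hp : p.IsCycle) :
    ∃ L : List V, p.support.tail = L ++ [v] ∧ p.support.dropLast = v :: L := by
  rcases List.eq_nil_or_concat p.support.tail with h | ⟨L, a, h⟩
  · exact absurd h (cycle_tail_ne_nil hp)
  · have h' : p.support.tail = L ++ [a] := by simpa using h
    have hav : a = v := by
      have hg := List.getLast?_eq_getLast (p.support_ne_nil)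
      rw [p.getLast_support] at hg
      rw [p.support_eq_cons, h'] at hg
      rw [show (v :: (L ++ [a])) = (v :: L) ++ [a] by simp, List.getLast?_concat] at hg
      exact Option.some_inj.mp hg
    rw [hav] at h'
    refine ⟨L, h', ?_⟩
    conv_lhs => rw [p.support_eq_cons, h']
    rw [show (v :: (L ++ [v])) = (v :: L) ++ [v] by simp, List.dropLast_concat]

lemma cycle_dropLast_nodup {V : Type*} {G : SimpleGraph V} {v : V} {p : G.Walk v v}
    (hp : p.IsCycle) : p.support.dropLast.Nodup := by
  obtain ⟨L, ht, hd⟩ := cycle_decomp hp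
  have hnd : p.support.tail.Nodup := hp.support_nodup
  rw [ht, List.nodup_append] at hnd
  rw [hd]
  exact List.nodup_cons.mpr ⟨fun hv => hnd.2.2 v hv v (List.mem_singleton_self v) rfl, hnd.1⟩

lemma cycle_mem_aux {V : Type*} {G : SimpleGraph V} {v : V} {p : G.Walk v v}
    (hp : p.IsCycle) {i : V} (hi : i ∈ p.support) :
    i ∈ p.support.dropLast ∧ i ∈ p.support.tail := by
  obtain ⟨L, ht, hd⟩ := cycle_decomp hp
  rw [p.support_eq_cons, ht] at hi
  rw [hd, ht]
  simp only [List.mem_cons, List.mem_append, List.mem_singleton] at hi ⊢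
  tauto

lemma edist_ne_top_of_SE {n : ℕ} (hn : 3 ≤ n) {α : ℝ} {s : Profile n}
    (hSE : IsStrongEq α s) : ∀ i j : Fin n, (NCGraph s).edist i j ≠ ⊤ := by
  by_contra h
  push_neg at h
  obtain ⟨i0, j0, h0⟩ := h
  classical
  set star : Profile n := fun i => if i = i0 then Finset.univ.erase i0 else ∅ with hstar
  have hvalid : Valid star := by
    intro i
    by_cases hi : i = i0 <;> simp [hstar, hi]
  have : Fact (3 ≤ n) := ⟨hn⟩
  have hne0 : 0 < n := by omega
  have : NeZero n := ⟨by omega⟩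
  have hNe : (Finset.univ : Finset (Fin n)).Nonempty := ⟨⟨0, hne0⟩, Finset.mem_univ _⟩
  have hadj : ∀ a : Fin n, a ≠ i0 → (NCGraph star).Adj i0 a := by
    intro a ha
    rw [ncg_adj]
    refine ⟨fun hc => ha hc.symm, Or.inl ?_⟩
    simp [hstar, ha]
  have hstar_edist : ∀ a b : Fin n, (NCGraph star).edist a b ≤ 2 := by
    have h1 : ∀ a : Fin n, (NCGraph star).edist i0 a ≤ 1 := by
      intro a
      by_cases ha : a = i0
      · subst ha; simp [SimpleGraph.edist_self]
      · exact le_of_eq (SimpleGraph.edist_eq_one_iff_adj.mpr (hadj a ha))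
    intro a b
    calc (NCGraph star).edist a b ≤ (NCGraph star).edist a i0 + (NCGraph star).edist i0 b :=
          SimpleGraph.edist_triangle
      _ ≤ 1 + 1 := by
          gcongr
          · rw [SimpleGraph.edist_comm]; exact h1 a
          · exact h1 b
      _ = 2 := by norm_num
  have hcost' : ∀ i, cost α star i ≠ ⊤ := by
    intro i
    rw [cost]
    refine ENNReal.add_ne_top.mpr ⟨ENNReal.mul_ne_top ENNReal.ofReal_ne_top
      (ENNReal.natCast_ne_top _), ?_⟩
    rw [dCost]
    refine (ENNReal.sum_lt_top.mpr fun j _ => ?_).ne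
    calc ((NCGraph star).edist i j : ℝ≥0∞) ≤ ((2 : ℕ∞) : ℝ≥0∞) :=
          ENat.toENNReal_le.mpr (hstar_edist i j)
      _ < ⊤ := by simp
  have hcost : ∀ i : Fin n, cost α s i = ⊤ := by
    intro i
    have hj : ∃ j, (NCGraph s).edist i j = ⊤ := by
      by_contra hno
      push_neg at hno
      have htri : (NCGraph s).edist i0 j0 ≤ (NCGraph s).edist i0 i + (NCGraph s).edist i j0 :=
        SimpleGraph.edist_triangle
      rw [h0] at htri
      have hfin : (NCGraph s).edist i0 i + (NCGraph s).edist i j0 ≠ ⊤ := by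
        rw [SimpleGraph.edist_comm]
        exact WithTop.add_ne_top.mpr ⟨hno i0, hno j0⟩
      exact hfin (top_le_iff.mp htri)
    obtain ⟨j, hj⟩ := hj
    rw [cost, ENNReal.add_eq_top]
    right
    rw [dCost, ENNReal.sum_eq_top]
    exact ⟨j, Finset.mem_univ _, by rw [hj]; rfl⟩
  obtain ⟨i, -, hle⟩ := hSE Finset.univ star hNe hvalid (fun i hi => absurd (Finset.mem_univ i) hi)
  rw [hcost i] at hle
  exact hcost' i (top_le_iff.mp hle)


lemma enat_cast_ne_top {x : ℕ∞} (h : x ≠ ⊤) : (x : ℝ≥0∞) ≠ ⊤ := by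
  lift x to ℕ using h
  simp

/-- For `α < 2`, the complement of the graph of a strong equilibrium is a forest. -/
theorem stmt4 {n : ℕ} (hn : 3 ≤ n) (α : ℝ) (hα0 : 0 ≤ α) (hα : α < 2)
    (s : Profile n) (hv : Valid s) (hSE : IsStrongEq α s) :
    (NCGraph s)ᶜ.IsAcyclic := by
  intro v p hp
  classical
  have hconn := edist_ne_top_of_SE hn hSE
  have hndL : p.support.dropLast.Nodup := cycle_dropLast_nodup hp
  have hfst := p.map_fst_darts
  have hndfst : (p.darts.map (·.fst)).Nodup := by rw [hfst]; exact hndL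
  have hedges : (p.darts.map SimpleGraph.Dart.edge).Nodup := hp.isTrail.edges_nodup
  set nxt : Fin n → Fin n := fun u =>
    (((p.darts.find? (fun d => d.fst == u)).map (fun d => d.snd)).getD u) with hnxtdef
  have hnxt_dart : ∀ d ∈ p.darts, nxt d.fst = d.snd := by
    intro d hd
    have hsome : (p.darts.find? (fun d' => d'.fst == d.fst)).isSome := by
      rw [List.find?_isSome]
      exact ⟨d, hd, by simp⟩
    obtain ⟨d', hd'⟩ := Option.isSome_iff_exists.mp hsome
    have hmem : d' ∈ p.darts := List.mem_of_find?_eq_some hd'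
    have heq : d'.fst = d.fst := by simpa using List.find?_some hd'
    have hdd : d' = d := List.inj_on_of_nodup_map hndfst hmem hd heq
    rw [hnxtdef]
    simp only [hd', Option.map_some, Option.getD_some, hdd]
  have hout : ∀ i ∈ p.support, ∃ d ∈ p.darts, d.fst = i := by
    intro i hi
    have : i ∈ p.darts.map (·.fst) := by
      rw [hfst]; exact (cycle_mem_aux hp hi).1
    simpa using this
  have hin : ∀ i ∈ p.support, ∃ d ∈ p.darts, d.snd = i := by
    intro i hi
    have : i ∈ p.darts.map (·.snd) := by
      rw [p.map_snd_darts]; exact (cycle_mem_aux hp hi).2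
    simpa using this
  set K := p.support.toFinset with hK
  set s' : Profile n := fun i => if i ∈ K then insert (nxt i) (s i) else s i with hs'def
  have hsK : ∀ i ∈ K, s' i = insert (nxt i) (s i) := by
    intro i hi; rw [hs'def]; simp [hi]
  have hsnK : ∀ i ∉ K, s' i = s i := by
    intro i hi; rw [hs'def]; simp [hi]
  have hsub : ∀ i, s i ⊆ s' i := by
    intro i
    by_cases hi : i ∈ K
    · rw [hsK i hi]; exact Finset.subset_insert _ _
    · rw [hsnK i hi]
  have hmle := ncg_mono hsub
  have hAdjC : ∀ i ∈ p.support, (NCGraph s)ᶜ.Adj i (nxt i) := by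
    intro i hi
    obtain ⟨d, hd, hdf⟩ := hout i hi
    have h2 := hnxt_dart d hd
    rw [hdf] at h2
    have hda : (NCGraph s)ᶜ.Adj d.fst d.snd := d.adj
    rwa [hdf, ← h2] at hda
  have hvalid' : Valid s' := by
    intro i
    by_cases hi : i ∈ K
    · rw [hsK i hi]
      have hadj := hAdjC i (List.mem_toFinset.mp hi)
      simp only [Finset.mem_insert]
      push_neg
      exact ⟨hadj.ne, hv i⟩
    · rw [hsnK i hi]; exact hv i
  have key : ∀ i ∈ K, cost α s' i < cost α s i := by
    intro i hiK
    have hi : i ∈ p.support := List.mem_toFinset.mp hiK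
    have hadjC := hAdjC i hi
    rw [SimpleGraph.compl_adj] at hadjC
    obtain ⟨d, hd, hds⟩ := hin i hi
    have hqsupp : d.fst ∈ p.support := p.dart_fst_mem_support_of_mem_darts hd
    have hqK : d.fst ∈ K := List.mem_toFinset.mpr hqsupp
    have hnq : nxt d.fst = i := by rw [hnxt_dart d hd, hds]
    have hadjC2 : (NCGraph s)ᶜ.Adj d.fst i := by rw [← hds]; exact d.adj
    rw [SimpleGraph.compl_adj] at hadjC2
    have hqne : d.fst ≠ nxt i := by
      intro hqe
      obtain ⟨d2, hd2, hd2f⟩ := hout i hi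
      have h2 := hnxt_dart d2 hd2
      rw [hd2f] at h2
      have hedge : d.edge = d2.edge := by
        have e1 : d.edge = s(d.fst, d.snd) := rfl
        have e2 : d2.edge = s(d2.fst, d2.snd) := rfl
        rw [e1, e2, hds, hd2f, ← h2, ← hqe, Sym2.eq_swap]
      have hdd2 : d = d2 := List.inj_on_of_nodup_map hedges hd hd2 hedge
      apply hadjC2.1
      rw [hdd2, hd2f]
    have hGadj1 : (NCGraph s').Adj i (nxt i) := by
      rw [ncg_adj]
      exact ⟨hadjC.1, Or.inl (by rw [hsK i hiK]; exact Finset.mem_insert_self _ _)⟩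
    have hGadj2 : (NCGraph s').Adj d.fst i := by
      rw [ncg_adj]
      refine ⟨hadjC2.1, Or.inl ?_⟩
      rw [hsK d.fst hqK, hnq]
      exact Finset.mem_insert_self _ _
    have he1' : (NCGraph s').edist i (nxt i) = 1 :=
      SimpleGraph.edist_eq_one_iff_adj.mpr hGadj1
    have he2' : (NCGraph s').edist i d.fst = 1 := by
      rw [SimpleGraph.edist_comm]
      exact SimpleGraph.edist_eq_one_iff_adj.mpr hGadj2
    have he1 : 2 ≤ (NCGraph s).edist i (nxt i) := two_le_edist hadjC.1 hadjC.2
    have he2 : 2 ≤ (NCGraph s).edist i d.fst := by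
      rw [SimpleGraph.edist_comm]
      exact two_le_edist hadjC2.1 hadjC2.2
    have hcard : (s' i).card = (s i).card + 1 := by
      rw [hsK i hiK]
      rw [Finset.card_insert_of_notMem]
      intro hmem
      exact hadjC.2 ((ncg_adj s i (nxt i)).mpr ⟨hadjC.1, Or.inl hmem⟩)
    set T : Finset (Fin n) := (Finset.univ.erase (nxt i)).erase d.fst with hT
    have hqmem : d.fst ∈ Finset.univ.erase (nxt i) :=
      Finset.mem_erase.mpr ⟨hqne, Finset.mem_univ _⟩
    have hsplit : ∀ f : Fin n → ℝ≥0∞, ∑ j, f j = f (nxt i) + (f d.fst + ∑ j ∈ T, f j) := by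
      intro f
      rw [← Finset.add_sum_erase _ f (Finset.mem_univ (nxt i))]
      congr 1
      rw [hT, ← Finset.add_sum_erase _ f hqmem]
    have hS : ∑ j ∈ T, ((NCGraph s').edist i j : ℝ≥0∞)
        ≤ ∑ j ∈ T, ((NCGraph s).edist i j : ℝ≥0∞) :=
      Finset.sum_le_sum fun j _ => ENat.toENNReal_le.mpr (SimpleGraph.edist_anti hmle)
    have hSfin : ∑ j ∈ T, ((NCGraph s).edist i j : ℝ≥0∞) ≠ ⊤ := by
      refine (ENNReal.sum_lt_top.mpr fun j _ => ?_).ne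
      exact lt_top_iff_ne_top.mpr (enat_cast_ne_top (hconn i j))
    have hAne : ENNReal.ofReal α * ((s i).card : ℝ≥0∞) ≠ ⊤ :=
      ENNReal.mul_ne_top ENNReal.ofReal_ne_top (ENNReal.natCast_ne_top _)
    have hfin : ENNReal.ofReal α * ((s i).card : ℝ≥0∞)
        + ∑ j ∈ T, ((NCGraph s').edist i j : ℝ≥0∞) ≠ ⊤ :=
      ENNReal.add_ne_top.mpr ⟨hAne, fun h => hSfin (top_le_iff.mp (h ▸ hS))⟩
    have hd' : dCost s' i = 1 + (1 + ∑ j ∈ T, ((NCGraph s').edist i j : ℝ≥0∞)) := by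
      rw [dCost, hsplit (fun j => ((NCGraph s').edist i j : ℝ≥0∞)), he1', he2']
      norm_num
    have hdo : dCost s i = ((NCGraph s).edist i (nxt i) : ℝ≥0∞)
        + (((NCGraph s).edist i d.fst : ℝ≥0∞) + ∑ j ∈ T, ((NCGraph s).edist i j : ℝ≥0∞)) :=
      hsplit (fun j => ((NCGraph s).edist i j : ℝ≥0∞))
    have hb1 : (2 : ℝ≥0∞) ≤ ((NCGraph s).edist i (nxt i) : ℝ≥0∞) := by
      have := ENat.toENNReal_le.mpr he1
      simpa using this
    have hb2 : (2 : ℝ≥0∞) ≤ ((NCGraph s).edist i d.fst : ℝ≥0∞) := by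
      have := ENat.toENNReal_le.mpr he2
      simpa using this
    have hαlt : ENNReal.ofReal α < 2 := by
      calc ENNReal.ofReal α < ENNReal.ofReal 2 :=
            (ENNReal.ofReal_lt_ofReal_iff (by norm_num)).mpr hα
        _ = 2 := by norm_num
    calc cost α s' i
        = (ENNReal.ofReal α * ((s i).card : ℝ≥0∞)
            + ∑ j ∈ T, ((NCGraph s').edist i j : ℝ≥0∞)) + (ENNReal.ofReal α + 2) := by
          rw [cost, hcard, hd']
          push_cast
          ring
      _ < (ENNReal.ofReal α * ((s i).card : ℝ≥0∞)
            + ∑ j ∈ T, ((NCGraph s').edist i j : ℝ≥0∞)) + (2 + 2) := by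
          refine ENNReal.add_lt_add_left hfin ?_
          exact ENNReal.add_lt_add_right (by norm_num) hαlt
      _ ≤ ENNReal.ofReal α * ((s i).card : ℝ≥0∞)
            + (((NCGraph s).edist i (nxt i) : ℝ≥0∞)
              + (((NCGraph s).edist i d.fst : ℝ≥0∞)
                + ∑ j ∈ T, ((NCGraph s).edist i j : ℝ≥0∞))) := by
          calc (ENNReal.ofReal α * ((s i).card : ℝ≥0∞)
                + ∑ j ∈ T, ((NCGraph s').edist i j : ℝ≥0∞)) + (2 + 2)
              = ENNReal.ofReal α * ((s i).card : ℝ≥0∞)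
                + (2 + (2 + ∑ j ∈ T, ((NCGraph s').edist i j : ℝ≥0∞))) := by ring
            _ ≤ _ := by gcongr
      _ = cost α s i := by rw [cost, hdo]
  have hKne : K.Nonempty := ⟨v, List.mem_toFinset.mpr p.start_mem_support⟩
  obtain ⟨i, hiK, hle⟩ := hSE K s' hKne hvalid' hsnK
  exact absurd hle (not_le.mpr (key i hiK))
end

section
/- For α < 2 and n ≥ 3, if s is a strong equilibrium of the network creation game, then G(s) contains no independent set of size 3. -/
open SimpleGraph ENNReal Finset

lemma edist_cast_ne_top_of_adjacent {n : ℕ} (s : Profile n) (i : Fin n)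
    (h : ∀ j : Fin n, j ≠ i → (NCGraph s).Adj i j) : dCost s i ≠ ⊤ := by
  rw [dCost, ENNReal.sum_ne_top]
  intro j _
  by_cases hj : j = i
  · subst hj; simp
  · have : (NCGraph s).edist i j = 1 := (SimpleGraph.edist_eq_one_iff_adj).mpr (h j hj)
    simp [this]

lemma se_fin {n : ℕ} (α : ℝ) (s : Profile n) (hv : Valid s) (hSE : IsStrongEq α s) :
    ∀ i j, (NCGraph s).edist i j ≠ ⊤ := by
  by_contra h
  push_neg at h
  obtain ⟨i, j, hij⟩ := h
  set s' : Profile n := Function.update s i (Finset.univ.erase i) with hs'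
  have hv' : Valid s' := by
    intro k
    by_cases hk : k = i
    · rw [hk, hs', Function.update_self]; simp
    · simp only [hs', Function.update_of_ne hk]; exact hv k
  obtain ⟨i', hi', hle⟩ := hSE {i} s' ⟨i, Finset.mem_singleton_self i⟩ hv'
    (fun k hk => Function.update_of_ne (by simpa using hk) _ _)
  rw [Finset.mem_singleton] at hi'
  rw [hi'] at hle
  have htop : cost α s i = ⊤ := by
    have : dCost s i = ⊤ := by
      rw [dCost, ENNReal.sum_eq_top]
      exact ⟨j, Finset.mem_univ j, by simp [hij]⟩
    simp [cost, this]
  have hne : cost α s' i ≠ ⊤ := by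
    have hd : dCost s' i ≠ ⊤ := by
      apply edist_cast_ne_top_of_adjacent
      intro k hk
      rw [NCGraph, SimpleGraph.fromRel_adj]
      exact ⟨Ne.symm hk, Or.inl (by simp [hs', hk])⟩
    simp only [cost, ne_eq, ENNReal.add_eq_top, not_or]
    exact ⟨ENNReal.mul_ne_top ENNReal.ofReal_ne_top (ENNReal.natCast_ne_top _), hd⟩
  rw [htop] at hle
  exact hne (top_le_iff.mp hle)

lemma key_lemma {n : ℕ} (α : ℝ) (hα : α < 2) (s s' : Profile n)
    (hle : NCGraph s ≤ NCGraph s') (x y z : Fin n)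
    (hxy : x ≠ y) (hxz : x ≠ z) (hyz : y ≠ z)
    (hnxy : ¬(NCGraph s).Adj x y) (hnxz : ¬(NCGraph s).Adj x z)
    (hcard : (s' x).card ≤ (s x).card + 1)
    (hady : (NCGraph s').Adj x y) (hadz : (NCGraph s').Adj x z)
    (hfin : ∀ j, (NCGraph s).edist x j ≠ ⊤) :
    cost α s' x < cost α s x := by
  set A := ENNReal.ofReal α with hA
  have hA2 : A < 2 := by
    calc A < ENNReal.ofReal 2 := (ENNReal.ofReal_lt_ofReal_iff (by norm_num)).mpr hα
    _ = 2 := by norm_num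
  set P : Finset (Fin n) := {y, z} with hP
  have hPsub : P ⊆ Finset.univ := Finset.subset_univ _
  set R : ℝ≥0∞ := ∑ j ∈ Finset.univ \ P, ((NCGraph s).edist x j : ℝ≥0∞) with hR
  have hRfin : R ≠ ⊤ := by
    rw [hR, ENNReal.sum_ne_top]
    intro j _
    exact fun h => hfin j (ENat.toENNReal_strictMono.injective (h.trans ENat.toENNReal_top.symm))
  have hsplit : ∀ (f : Fin n → ℝ≥0∞),
      ∑ j, f j = f y + f z + ∑ j ∈ Finset.univ \ P, f j := by
    intro f
    rw [← Finset.sum_sdiff hPsub, hP, Finset.sum_pair hyz]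
    ring
  -- lower bound on edist x y and x z
  have hge : ∀ w : Fin n, x ≠ w → ¬(NCGraph s).Adj x w →
      (2 : ℝ≥0∞) ≤ ((NCGraph s).edist x w : ℝ≥0∞) := by
    intro w hw hnw
    have h0 : (NCGraph s).edist x w ≠ 0 := by
      simp [SimpleGraph.edist_eq_zero_iff, hw]
    have h1 : (NCGraph s).edist x w ≠ 1 := by
      simp [SimpleGraph.edist_eq_one_iff_adj, hnw]
    have hft := hfin w
    have h2 : (2 : ℕ∞) ≤ (NCGraph s).edist x w := by
      generalize (NCGraph s).edist x w = e at h0 h1 hft ⊢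
      lift e to ℕ using hft with m
      norm_cast at h0 h1 ⊢
      omega
    exact_mod_cast h2
  have hgy := hge y hxy hnxy
  have hgz := hge z hxz hnxz
  -- upper bound on new cost
  have hup : cost α s' x ≤ A * (s x).card + R + (A + 2) := by
    rw [cost, dCost, hsplit]
    have e1 : ((NCGraph s').edist x y : ℝ≥0∞) = 1 := by
      rw [SimpleGraph.edist_eq_one_iff_adj.mpr hady]; simp
    have e2 : ((NCGraph s').edist x z : ℝ≥0∞) = 1 := by
      rw [SimpleGraph.edist_eq_one_iff_adj.mpr hadz]; simp
    have hcard' : A * (s' x).card ≤ A * (s x).card + A := by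
      calc A * (s' x).card ≤ A * ((s x).card + 1 : ℕ) :=
            mul_le_mul_right (by exact_mod_cast hcard) A
        _ = A * (s x).card + A := by push_cast; ring
    have hRle : ∑ j ∈ Finset.univ \ P, ((NCGraph s').edist x j : ℝ≥0∞) ≤ R := by
      rw [hR]
      apply Finset.sum_le_sum
      intro j _
      exact_mod_cast SimpleGraph.edist_anti hle
    calc A * (s' x).card + (((NCGraph s').edist x y : ℝ≥0∞) +
          ((NCGraph s').edist x z : ℝ≥0∞) +
          ∑ j ∈ Finset.univ \ P, ((NCGraph s').edist x j : ℝ≥0∞))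
        ≤ (A * (s x).card + A) + (1 + 1 + R) := by
          rw [e1, e2]; gcongr
      _ = A * (s x).card + R + (A + 2) := by ring
  -- lower bound on old cost
  have hlow : A * (s x).card + R + 4 ≤ cost α s x := by
    rw [cost, dCost, hsplit]
    calc A * (s x).card + R + 4
        = A * (s x).card + ((2 + 2) + R) := by ring
      _ ≤ A * (s x).card + (((NCGraph s).edist x y : ℝ≥0∞) +
          ((NCGraph s).edist x z : ℝ≥0∞) + R) := by gcongr
  have hmid : A * (s x).card + R + (A + 2) < A * (s x).card + R + 4 := by
    apply ENNReal.add_lt_add_left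
    · exact ENNReal.add_ne_top.mpr
        ⟨ENNReal.mul_ne_top ENNReal.ofReal_ne_top (ENNReal.natCast_ne_top _), hRfin⟩
    · calc A + 2 < 2 + 2 := by exact ENNReal.add_lt_add_right (by norm_num) hA2
        _ = 4 := by norm_num
  exact lt_of_le_of_lt hup (lt_of_lt_of_le hmid hlow)

/-- For `α < 2`, the graph of a strong equilibrium contains no independent set of size `3`. -/
theorem stmt5 {n : ℕ} (hn : 3 ≤ n) (α : ℝ) (hα0 : 0 ≤ α) (hα : α < 2)
    (s : Profile n) (hv : Valid s) (hSE : IsStrongEq α s) :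
    ¬∃ a b c : Fin n, a ≠ b ∧ a ≠ c ∧ b ≠ c ∧
      ¬(NCGraph s).Adj a b ∧ ¬(NCGraph s).Adj a c ∧ ¬(NCGraph s).Adj b c := by
  rintro ⟨a, b, c, hab, hac, hbc, nab, nac, nbc⟩
  classical
  have hfin := se_fin α s hv hSE
  set s' : Profile n := fun k =>
    if k = a then insert b (s a)
    else if k = b then insert c (s b)
    else if k = c then insert a (s c)
    else s k with hs'
  have hsa : s' a = insert b (s a) := by simp [hs']
  have hsb : s' b = insert c (s b) := by simp [hs', hab.symm]
  have hsc : s' c = insert a (s c) := by simp [hs', hac.symm, hbc.symm]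
  have hv' : Valid s' := by
    intro k
    by_cases h1 : k = a
    · rw [h1, hsa]; simp [Finset.mem_insert, hab, hv a]
    by_cases h2 : k = b
    · rw [h2, hsb]; simp [Finset.mem_insert, hbc, hv b]
    by_cases h3 : k = c
    · rw [h3, hsc]; simp [Finset.mem_insert, Ne.symm hac, hv c]
    · simp only [hs', if_neg h1, if_neg h2, if_neg h3]; exact hv k
  have hsub : ∀ k, s k ⊆ s' k := by
    intro k x hx
    simp only [hs']
    split_ifs with h1 h2 h3
    · rw [h1] at hx; exact Finset.mem_insert_of_mem hx
    · rw [h2] at hx; exact Finset.mem_insert_of_mem hx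
    · rw [h3] at hx; exact Finset.mem_insert_of_mem hx
    · exact hx
  have hle : NCGraph s ≤ NCGraph s' := by
    intro u v huv
    rw [NCGraph, SimpleGraph.fromRel_adj] at huv ⊢
    exact ⟨huv.1, huv.2.imp (fun h => hsub u h) (fun h => hsub v h)⟩
  have adjab : (NCGraph s').Adj a b := by
    rw [NCGraph, SimpleGraph.fromRel_adj]
    exact ⟨hab, Or.inl (by rw [hsa]; exact Finset.mem_insert_self _ _)⟩
  have adjbc : (NCGraph s').Adj b c := by
    rw [NCGraph, SimpleGraph.fromRel_adj]
    exact ⟨hbc, Or.inl (by rw [hsb]; exact Finset.mem_insert_self _ _)⟩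
  have adjca : (NCGraph s').Adj c a := by
    rw [NCGraph, SimpleGraph.fromRel_adj]
    exact ⟨Ne.symm hac, Or.inl (by rw [hsc]; exact Finset.mem_insert_self _ _)⟩
  have hka : cost α s' a < cost α s a :=
    key_lemma α hα s s' hle a b c hab hac hbc nab nac
      (by rw [hsa]; exact Finset.card_insert_le _ _) adjab adjca.symm (hfin a)
  have hkb : cost α s' b < cost α s b :=
    key_lemma α hα s s' hle b c a hbc (Ne.symm hab) (Ne.symm hac)
      nbc (fun h => nab h.symm)
      (by rw [hsb]; exact Finset.card_insert_le _ _) adjbc adjab.symm (hfin b)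
  have hkc : cost α s' c < cost α s c :=
    key_lemma α hα s s' hle c a b (Ne.symm hac) (Ne.symm hbc) hab
      (fun h => nac h.symm) (fun h => nbc h.symm)
      (by rw [hsc]; exact Finset.card_insert_le _ _) adjca adjbc.symm (hfin c)
  obtain ⟨i, hi, hcost⟩ := hSE {a, b, c} s' ⟨a, by simp⟩ hv'
    (fun k hk => by
      simp only [Finset.mem_insert, Finset.mem_singleton, not_or] at hk
      simp only [hs', if_neg hk.1, if_neg hk.2.1, if_neg hk.2.2])
  simp only [Finset.mem_insert, Finset.mem_singleton] at hi
  rcases hi with rfl | rfl | rfl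
  · exact absurd hcost (not_le.mpr hka)
  · exact absurd hcost (not_le.mpr hkb)
  · exact absurd hcost (not_le.mpr hkc)
end

section
/- For α = 1, a strategy profile s is a strong equilibrium of the network creation game if and only if s is rational, G(s) has diameter at most 2, and the complement of G(s) is a forest. -/
open SimpleGraph ENNReal Finset

section Aux

variable {V : Type*}

/-- In a path ending at `v`, the edge at `v` is unique. -/
lemma end_edge_unique {H : SimpleGraph V} :
    ∀ {u v : V} (p : H.Walk u v), p.IsPath → ∀ x y,
      s(x, v) ∈ p.edges → s(y, v) ∈ p.edges → x = y := by
  intro u v p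
  induction p with
  | nil => simp
  | @cons a b c h q ih =>
    intro hp x y hx hy
    rw [Walk.cons_isPath_iff] at hp
    have hend : ∀ z : V, s(z, c) ∈ (Walk.cons h q).edges → (z = a ∧ c = b) ∨ s(z, c) ∈ q.edges := by
      intro z hz
      rw [Walk.edges_cons, List.mem_cons] at hz
      rcases hz with hz | hz
      · rw [Sym2.eq_iff] at hz
        rcases hz with ⟨rfl, rfl⟩ | ⟨rfl, rfl⟩
        · exact Or.inl ⟨rfl, rfl⟩
        · exact absurd q.end_mem_support hp.2
      · exact Or.inr hz
    rcases hend x hx with ⟨rfl, rfl⟩ | hx'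
    · rcases hend y hy with ⟨rfl, _⟩ | hy'
      · rfl
      · have : q = Walk.nil := Walk.isPath_iff_eq_nil.mp hp.1
        subst this; simp at hy'
    · rcases hend y hy with ⟨rfl, rfl⟩ | hy'
      · have : q = Walk.nil := Walk.isPath_iff_eq_nil.mp hp.1
        subst this; simp at hx'
      · exact ih hp.1 x y hx' hy'

lemma exists_leaf [Fintype V] {H : SimpleGraph V} (hac : H.IsAcyclic)
    {a b : V} (hab : H.Adj a b) : ∃ v x, H.Adj x v ∧ ∀ y, H.Adj y v → y = x := by
  classical
  set S : Set ℕ := {l | ∃ (u w : V) (p : H.Walk u w), p.IsPath ∧ p.length = l} with hSdef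
  have hbdd : BddAbove S := by
    refine ⟨Fintype.card V, ?_⟩
    rintro l ⟨u, w, p, hp, rfl⟩
    exact hp.length_lt.le
  have h1S : (1 : ℕ) ∈ S := ⟨a, b, (SimpleGraph.Path.singleton hab).1,
    (SimpleGraph.Path.singleton hab).2, rfl⟩
  obtain ⟨u, v, p, hp, hlen⟩ := Nat.sSup_mem ⟨1, h1S⟩ hbdd
  have hmax : ∀ l ∈ S, l ≤ p.length := by
    intro l hl; rw [hlen]; exact le_csSup hbdd hl
  have h1 : 1 ≤ p.length := by rw [hlen]; exact le_csSup hbdd h1S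
  cases hq : p.reverse with
  | nil =>
    have : p.reverse.length = p.length := p.length_reverse
    rw [hq] at this; simp at this; omega
  | @cons _ c _ hvc q =>
  have hlast : s(c, v) ∈ p.edges := by
    have : s(v, c) ∈ p.reverse.edges := by rw [hq]; simp
    rw [Walk.edges_reverse, List.mem_reverse] at this
    rwa [Sym2.eq_swap] at this
  refine ⟨v, c, hvc.symm, ?_⟩
  intro y hyv
  by_contra hyc
  have hys : y ∈ p.support := by
    by_contra hns
    have hpath : (p.concat hyv.symm).IsPath := by
      rw [← Walk.isPath_reverse_iff, Walk.reverse_concat, Walk.cons_isPath_iff]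
      refine ⟨hp.reverse, ?_⟩
      rw [Walk.support_reverse, List.mem_reverse]; exact hns
    have : p.length + 1 ∈ S := ⟨u, y, p.concat hyv.symm, hpath, Walk.length_concat _ _⟩
    have := hmax _ this; omega
  have hq2p : (p.dropUntil y hys).IsPath := hp.dropUntil hys
  by_cases he : s(v, y) ∈ (p.dropUntil y hys).edges
  · have : s(y, v) ∈ p.edges := by
      have := p.edges_dropUntil_subset hys he
      rwa [Sym2.eq_swap] at this
    exact hyc (end_edge_unique p hp y c this hlast)
  · exact hac (Walk.cons hyv.symm (p.dropUntil y hys))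
      ((Walk.cons_isCycle_iff _ hyv.symm).mpr ⟨hq2p, he⟩)

lemma forest_count [Fintype V] [DecidableEq V] {G : SimpleGraph V} (hG : G.IsAcyclic) :
    ∀ (F : Finset (Sym2 V)), ∀ (K : Finset V), (↑F ⊆ G.edgeSet) →
      (∀ e ∈ F, ∀ x ∈ e, x ∈ K) → K.Nonempty → F.card < K.card := by
  intro F
  induction F using Finset.strongInduction with
  | _ F ih =>
  intro K hFE hFK hK
  rcases F.eq_empty_or_nonempty with rfl | ⟨e₀, he₀⟩
  · simpa using hK.card_pos
  · classical
    set H : SimpleGraph V := SimpleGraph.fromEdgeSet ↑F with hH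
    have hHle : H ≤ G := by
      intro x y hxy
      rw [hH, SimpleGraph.fromEdgeSet_adj] at hxy
      exact hFE hxy.1
    have hHac : H.IsAcyclic := fun w c hc => hG (c.mapLe hHle) (hc.mapLe hHle)
    obtain ⟨⟨a, b⟩, rfl⟩ := e₀.exists_rep
    have hGab : G.Adj a b := (G.mem_edgeSet).mp (hFE he₀)
    have hab : H.Adj a b := by
      rw [hH, SimpleGraph.fromEdgeSet_adj]
      exact ⟨he₀, hGab.ne⟩
    obtain ⟨v, x, hxv, huniq⟩ := exists_leaf hHac hab
    have hxvF : s(x, v) ∈ F := by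
      have := hxv
      rw [hH, SimpleGraph.fromEdgeSet_adj] at this
      exact this.1
    have hvK : v ∈ K := hFK _ hxvF v (Sym2.mem_mk_right x v)
    have hxK : x ∈ K := hFK _ hxvF x (Sym2.mem_mk_left x v)
    have hxvne : x ≠ v := hxv.ne
    -- apply IH to F.erase s(x,v), K.erase v
    have hcard := ih (F.erase s(x, v)) (Finset.erase_ssubset hxvF) (K.erase v)
      (fun e he => hFE (Finset.mem_of_mem_erase he))
      ?_ ⟨x, Finset.mem_erase.mpr ⟨hxvne, hxK⟩⟩
    · rw [Finset.card_erase_of_mem hxvF, Finset.card_erase_of_mem hvK] at hcard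
      have := hK.card_pos
      have hF1 : 1 ≤ F.card := Finset.card_pos.mpr ⟨_, hxvF⟩
      omega
    · -- endpoints of remaining edges avoid v
      intro e he w hw
      have heF := Finset.mem_of_mem_erase he
      refine Finset.mem_erase.mpr ⟨?_, hFK _ heF w hw⟩
      rintro rfl
      obtain ⟨z, rfl⟩ := Sym2.mem_iff_exists.mp hw
      have hGvz := (G.mem_edgeSet).mp (hFE heF)
      have hzv : H.Adj z w := by
        rw [hH, SimpleGraph.fromEdgeSet_adj]
        exact ⟨by rwa [Sym2.eq_swap], hGvz.ne.symm⟩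
      have hzx := huniq z hzv
      subst hzx
      exact (Finset.mem_erase.mp he).1 (Sym2.eq_swap ..)

lemma cyc_extract {V : Type*} [DecidableEq V] {H : SimpleGraph V} (h : ¬H.IsAcyclic) :
    ∃ (K : Finset V) (f g : V → V), K.Nonempty ∧
      ∀ x ∈ K, f x ∈ K ∧ g x ∈ K ∧ H.Adj x (f x) ∧ f (g x) = x ∧ g (f x) = x ∧ f x ≠ g x := by
  rw [SimpleGraph.IsAcyclic] at h; push_neg at h
  obtain ⟨v, c, hc⟩ := h
  have h3 : 3 ≤ c.length := hc.three_le_length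
  have hlen : c.support.length = c.length + 1 := c.length_support
  obtain ⟨L, hLdef⟩ : ∃ L, L = c.support.dropLast := ⟨_, rfl⟩
  have hk : L.length = c.length := by
    rw [hLdef, List.length_dropLast, hlen]; omega
  set k := L.length with hkdef
  have hk3 : 3 ≤ k := by omega
  have hsupp : c.support = L ++ [v] := by
    rw [hLdef]
    conv_lhs => rw [← List.dropLast_append_getLast (c.support_ne_nil)]
    rw [c.getLast_support]
  have hcons : c.support = v :: c.support.tail := c.support_eq_cons
  have htne : c.support.tail ≠ [] := by
    have hlt : c.support.tail.length = c.length := by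
      rw [List.length_tail, hlen]; omega
    intro hh; rw [hh] at hlt; simp at hlt; omega
  have hLcons : L = v :: c.support.tail.dropLast := by
    obtain ⟨w, t', ht'⟩ := List.exists_cons_of_ne_nil htne
    rw [hLdef]
    conv_lhs => rw [hcons, ht']
    rw [List.dropLast_cons₂, ← ht']
  have htnodup : c.support.tail.Nodup := hc.2
  have htsplit : c.support.tail = c.support.tail.dropLast ++ [v] := by
    have h1 : v :: c.support.tail = (v :: c.support.tail.dropLast) ++ [v] := by
      rw [← hLcons, ← hcons, hsupp]
    exact List.cons_injective h1
  have hvnotin : v ∉ c.support.tail.dropLast := by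
    intro hv
    rw [htsplit] at htnodup
    exact (List.nodup_append'.mp htnodup).2.2 hv (by simp)
  have hLnodup : L.Nodup := by
    rw [hLcons, List.nodup_cons]
    exact ⟨hvnotin, List.Sublist.nodup (List.dropLast_sublist _) htnodup⟩
  have getIdx : ∀ (a b : ℕ) (ha : a < k) (hb : b < k), a = b → L[a]'ha = L[b]'hb := by
    intro a b ha hb hab; subst hab; rfl
  have hL0 : L[0]'(by omega) = v := by
    rw [List.getElem_of_eq hLcons]; rfl
  have hgetL : ∀ (j : ℕ) (hj : j < k), L[j]'hj = c.support[j]'(by rw [hlen]; omega) := by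
    intro j hj
    rw [List.getElem_of_eq hLdef]
    exact List.getElem_dropLast ..
  have hchain : List.IsChain H.Adj c.support := c.isChain_adj_support
  have hchain' := List.isChain_iff_getElem.mp hchain
  have hadj : ∀ (t : ℕ) (ht : t < k), H.Adj (L[t]'ht) (L[(t+1) % k]'(Nat.mod_lt _ (by omega))) := by
    intro t ht
    rcases Nat.lt_or_ge (t+1) k with h1 | h1
    · rw [getIdx _ (t+1) _ h1 (Nat.mod_eq_of_lt h1), hgetL t ht, hgetL (t+1) h1]
      have := hchain' t (by omega)
      simpa using this
    · have ht1 : t = k - 1 := by omega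
      have hmod : (t+1) % k = 0 := by
        subst ht1; rw [Nat.sub_add_cancel (by omega : 1 ≤ k), Nat.mod_self]
      rw [getIdx _ 0 _ (by omega) hmod, hL0, hgetL t ht]
      have := hchain' t (by omega)
      have e2 : c.support[t+1]'(by omega) = v := by
        have : c.support[t+1]'(by omega) = (L ++ [v])[t+1]'(by rw [← hsupp]; omega) :=
          List.getElem_of_eq hsupp _
        rw [this, List.getElem_append_right (by omega)]
        simp [ht1, Nat.sub_add_cancel (by omega : 1 ≤ k)]
      rw [e2] at this
      exact this
  classical
  refine ⟨L.toFinset,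
    (fun x => if hx : x ∈ L then L[(L.idxOf x + 1) % k]'(Nat.mod_lt _ (by omega)) else x),
    (fun x => if hx : x ∈ L then L[(L.idxOf x + (k-1)) % k]'(Nat.mod_lt _ (by omega)) else x),
    ?_, ?_⟩
  · exact ⟨v, by rw [List.mem_toFinset, hLcons]; simp⟩
  · intro x hx
    rw [List.mem_toFinset] at hx
    have htk : L.idxOf x < k := List.idxOf_lt_length_iff.mpr hx
    set t := L.idxOf x with htdef
    have hxt : L[t]'htk = x := List.getElem_idxOf htk
    have hmem : ∀ (j : ℕ) (hj : j < k), L[j]'hj ∈ L := fun j hj => List.getElem_mem _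
    have hidx : ∀ (j : ℕ) (hj : j < k), L.idxOf (L[j]'hj) = j :=
      fun j hj => hLnodup.idxOf_getElem j hj
    have hf : ∀ (j : ℕ) (hj : j < k),
        (fun y => if hy : y ∈ L then L[(L.idxOf y + 1) % k]'(Nat.mod_lt _ (by omega)) else y) (L[j]'hj)
          = L[(j+1) % k]'(Nat.mod_lt _ (by omega)) := by
      intro j hj
      simp only [dif_pos (hmem j hj), hidx j hj]
    have hg : ∀ (j : ℕ) (hj : j < k),
        (fun y => if hy : y ∈ L then L[(L.idxOf y + (k-1)) % k]'(Nat.mod_lt _ (by omega)) else y) (L[j]'hj)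
          = L[(j+(k-1)) % k]'(Nat.mod_lt _ (by omega)) := by
      intro j hj
      simp only [dif_pos (hmem j hj), hidx j hj]
    have mod1 : ∀ j : ℕ, j < k → ((j + (k-1)) % k + 1) % k = j := by
      intro j hj
      rw [Nat.mod_add_mod]
      have he : j + (k-1) + 1 = j + k := by omega
      rw [he, Nat.add_mod_right, Nat.mod_eq_of_lt hj]
    have mod2 : ∀ j : ℕ, j < k → ((j + 1) % k + (k-1)) % k = j := by
      intro j hj
      rw [Nat.mod_add_mod]
      have he : j + 1 + (k-1) = j + k := by omega
      rw [he, Nat.add_mod_right, Nat.mod_eq_of_lt hj]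
    refine ⟨?_, ?_, ?_, ?_, ?_, ?_⟩
    · rw [← hxt, hf t htk, List.mem_toFinset]; exact hmem _ _
    · rw [← hxt, hg t htk, List.mem_toFinset]; exact hmem _ _
    · rw [← hxt, hf t htk]; exact hadj t htk
    · rw [← hxt, hg t htk, hf _ (Nat.mod_lt _ (by omega)),
        getIdx _ t (Nat.mod_lt _ (by omega)) htk (mod1 t htk)]
    · rw [← hxt, hf t htk, hg _ (Nat.mod_lt _ (by omega)),
        getIdx _ t (Nat.mod_lt _ (by omega)) htk (mod2 t htk)]
    · rw [← hxt, hf t htk, hg t htk]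
      intro heq
      rw [hLnodup.getElem_inj_iff] at heq
      have h2 := congrArg (fun z => (z + (k-1)) % k) heq
      rw [mod2 t htk, Nat.mod_add_mod] at h2
      have he : t + (k-1) + (k-1) = t + (k-2) + k := by omega
      rw [he, Nat.add_mod_right] at h2
      rcases Nat.lt_or_ge (t + (k-2)) k with hlt | hge
      · rw [Nat.mod_eq_of_lt hlt] at h2; omega
      · rw [Nat.mod_eq_sub_mod hge, Nat.mod_eq_of_lt (by omega)] at h2; omega

lemma ncAdj {n : ℕ} (s : Profile n) (i j : Fin n) :
    (NCGraph s).Adj i j ↔ i ≠ j ∧ (j ∈ s i ∨ i ∈ s j) :=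
  SimpleGraph.fromRel_adj _ i j

lemma ncMono {n : ℕ} {s s' : Profile n} (h : ∀ i, s i ⊆ s' i) : NCGraph s ≤ NCGraph s' := by
  intro i j hij
  rw [ncAdj] at hij ⊢
  exact ⟨hij.1, hij.2.imp (@h i j) (@h j i)⟩

lemma cost_one {n : ℕ} (s : Profile n) (i : Fin n) :
    cost 1 s i = ((s i).card : ℝ≥0∞) + dCost s i := by
  simp [cost]

/-- complement degree -/
def mdeg {n : ℕ} (s : Profile n) (i : Fin n) : ℕ :=
  (univ.filter (fun j => j ≠ i ∧ ¬ (NCGraph s).Adj i j)).card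

lemma natsum_aux {n : ℕ} (s : Profile n) (i : Fin n) :
    ∑ j : Fin n, (if j = i then 0 else if (NCGraph s).Adj i j then 1 else 2)
      = (n - 1) + mdeg s i := by
  have key : ∀ j : Fin n, (if j = i then 0 else if (NCGraph s).Adj i j then 1 else 2)
      = (if j ≠ i then 1 else 0) + (if j ≠ i ∧ ¬ (NCGraph s).Adj i j then 1 else 0) := by
    intro j
    by_cases h1 : j = i <;> by_cases h2 : (NCGraph s).Adj i j <;> simp [h1, h2]
  rw [Finset.sum_congr rfl (fun j _ => key j), Finset.sum_add_distrib]
  have e1 : (∑ j : Fin n, if j ≠ i then 1 else 0) = n - 1 := by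
    rw [← Finset.card_filter]
    rw [Finset.filter_ne' univ i, Finset.card_erase_of_mem (Finset.mem_univ i)]
    simp
  have e2 : (∑ j : Fin n, if j ≠ i ∧ ¬ (NCGraph s).Adj i j then 1 else 0) = mdeg s i := by
    rw [← Finset.card_filter]; rfl
  rw [e1, e2]

lemma dCost_le_two_mul {n : ℕ} {s : Profile n} {i : Fin n}
    (h : ∀ j, (NCGraph s).edist i j ≤ 2) : dCost s i ≤ 2 * n := by
  calc dCost s i ≤ ∑ _j : Fin n, (2:ℝ≥0∞) := by
        apply Finset.sum_le_sum
        intro j _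
        exact_mod_cast h j
    _ = 2 * n := by simp [mul_comm]

lemma dCost_eq {n : ℕ} {s : Profile n} {i : Fin n}
    (h : ∀ j, (NCGraph s).edist i j ≤ 2) :
    dCost s i = ((n - 1 + mdeg s i : ℕ) : ℝ≥0∞) := by
  have hval : ∀ j : Fin n, (NCGraph s).edist i j
      = ((if j = i then 0 else if (NCGraph s).Adj i j then 1 else 2 : ℕ) : ℕ∞) := by
    intro j
    by_cases h1 : j = i
    · simp [h1, SimpleGraph.edist_self]
    · by_cases h2 : (NCGraph s).Adj i j
      · simp [h1, h2, SimpleGraph.edist_eq_one_iff_adj.mpr h2]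
      · simp only [h1, h2, if_false, if_neg]
        have hle : (NCGraph s).edist i j ≤ 2 := h j
        have h0 : (NCGraph s).edist i j ≠ 0 :=
          fun hh => h1 ((SimpleGraph.edist_eq_zero_iff.mp hh).symm)
        have hone : (NCGraph s).edist i j ≠ 1 :=
          fun hh => h2 (SimpleGraph.edist_eq_one_iff_adj.mp hh)
        have htop : (NCGraph s).edist i j ≠ ⊤ := by
          intro hh; rw [hh] at hle; exact absurd hle (by simp)
        lift (NCGraph s).edist i j to ℕ using htop with d hd
        have h0' : d ≠ 0 := by exact_mod_cast h0
        have h1' : d ≠ 1 := by exact_mod_cast hone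
        have h2' : d ≤ 2 := by exact_mod_cast hle
        exact_mod_cast (by omega : d = 2)
  unfold dCost
  rw [← natsum_aux s i]
  push_cast
  apply Finset.sum_congr rfl
  intro j _
  rw [hval j]
  push_cast
  split_ifs <;> norm_num

lemma dCost_ge {n : ℕ} (s : Profile n) (i : Fin n) :
    ((n - 1 + mdeg s i : ℕ) : ℝ≥0∞) ≤ dCost s i := by
  rw [← natsum_aux s i]
  push_cast
  unfold dCost
  apply Finset.sum_le_sum
  intro j _
  by_cases h1 : j = i
  · simp [h1]
  · by_cases h2 : (NCGraph s).Adj i j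
    · simp only [h1, h2, if_false, if_true]
      have : (1 : ℕ∞) ≤ (NCGraph s).edist i j := by
        rw [SimpleGraph.edist_eq_one_iff_adj.mpr h2]
      exact_mod_cast this
    · simp only [h1, h2, if_false]
      have h0 : (NCGraph s).edist i j ≠ 0 :=
        fun hh => h1 ((SimpleGraph.edist_eq_zero_iff.mp hh).symm)
      have hone : (NCGraph s).edist i j ≠ 1 :=
        fun hh => h2 (SimpleGraph.edist_eq_one_iff_adj.mp hh)
      have : (2 : ℕ∞) ≤ (NCGraph s).edist i j := by
        rcases eq_or_ne ((NCGraph s).edist i j) ⊤ with hh | hh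
        · rw [hh]; exact le_top
        · lift (NCGraph s).edist i j to ℕ using hh with d hd
          have h0' : d ≠ 0 := by exact_mod_cast h0
          have h1' : d ≠ 1 := by exact_mod_cast hone
          exact_mod_cast (by omega : 2 ≤ d)
      have := ENat.toENNReal_le.mpr this
      simpa using this

lemma split2 {M : Type*} [AddCommMonoid M] {n : ℕ} (F : Fin n → M) {a b : Fin n} (hab : a ≠ b) :
    ∑ j, F j = F a + F b + ∑ j ∈ (univ.erase a).erase b, F j := by
  rw [← Finset.add_sum_erase univ F (mem_univ a),
    ← Finset.add_sum_erase _ F (Finset.mem_erase.mpr ⟨hab.symm, mem_univ b⟩), add_assoc]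

lemma lt_of_add_one_le {a b : ℝ≥0∞} (h : a + 1 ≤ b) (hb : b ≠ ⊤) : a < b := by
  have ha : a ≠ ⊤ := by
    intro ha; rw [ha, top_add] at h; exact hb (top_le_iff.mp h)
  exact lt_of_lt_of_le (ENNReal.lt_add_right ha one_ne_zero) h

lemma cost_fin {n : ℕ} {s : Profile n} {i : Fin n}
    (hd : ∀ j, (NCGraph s).edist i j ≤ 2) : cost 1 s i ≠ ⊤ := by
  rw [cost_one]
  refine ENNReal.add_ne_top.mpr ⟨ENNReal.natCast_ne_top _, ?_⟩
  exact ne_top_of_le_ne_top (ENNReal.mul_ne_top (by simp) (ENNReal.natCast_ne_top n)) (dCost_le_two_mul hd)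

lemma edist_two {V : Type*} {G : SimpleGraph V} {u v : V} (h0 : u ≠ v) (h1 : ¬G.Adj u v)
    (h2 : G.edist u v ≤ 2) : G.edist u v = 2 := by
  have hz : G.edist u v ≠ 0 := fun hh => h0 (SimpleGraph.edist_eq_zero_iff.mp hh)
  have ho : G.edist u v ≠ 1 := fun hh => h1 (SimpleGraph.edist_eq_one_iff_adj.mp hh)
  have ht : G.edist u v ≠ ⊤ := fun hh => by rw [hh] at h2; exact absurd h2 (by simp)
  lift G.edist u v to ℕ using ht with d hd
  have hz' : d ≠ 0 := by exact_mod_cast hz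
  have ho' : d ≠ 1 := by exact_mod_cast ho
  have h2' : d ≤ 2 := by exact_mod_cast h2
  exact_mod_cast (by omega : d = 2)

lemma cost_lt_nat {n : ℕ} {s s' : Profile n} {i : Fin n}
    (hd : ∀ j, (NCGraph s).edist i j ≤ 2) (hlt : cost 1 s' i < cost 1 s i) :
    (s' i).card + mdeg s' i < (s i).card + mdeg s i := by
  have h1 : ((((s' i).card + (n - 1 + mdeg s' i) : ℕ)) : ℝ≥0∞) ≤ cost 1 s' i := by
    rw [cost_one, Nat.cast_add]
    exact add_le_add le_rfl (dCost_ge s' i)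
  have h2 : cost 1 s i = (((s i).card + (n - 1 + mdeg s i) : ℕ) : ℝ≥0∞) := by
    rw [cost_one, dCost_eq hd]
    norm_cast
  have h3 := lt_of_le_of_lt h1 (hlt.trans_le h2.le)
  have h4 : (s' i).card + (n - 1 + mdeg s' i) < (s i).card + (n - 1 + mdeg s i) := by
    exact_mod_cast h3
  omega

def Afin {n : ℕ} (s s' : Profile n) (i : Fin n) : Finset (Fin n) :=
  univ.filter (fun j => ¬(NCGraph s).Adj i j ∧ (NCGraph s').Adj i j)
def Dfin {n : ℕ} (s s' : Profile n) (i : Fin n) : Finset (Fin n) :=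
  univ.filter (fun j => (NCGraph s).Adj i j ∧ ¬(NCGraph s').Adj i j)
def Zfin {n : ℕ} (s s' : Profile n) (i : Fin n) : Finset (Fin n) :=
  (s' i \ s i).filter (fun j => ¬(NCGraph s).Adj i j)
def Wfin {n : ℕ} (s s' : Profile n) (i : Fin n) : Finset (Fin n) :=
  (s' i \ s i).filter (fun j => (NCGraph s).Adj i j)
def Tfin {n : ℕ} (s s' : Profile n) (i : Fin n) : Finset (Fin n) :=
  (s i \ s' i).filter (fun j => i ∈ s' j)

lemma c2_count {n : ℕ} (s s' : Profile n) (i : Fin n) :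
    mdeg s' i + (Afin s s' i).card = mdeg s i + (Dfin s s' i).card := by
  unfold mdeg Afin Dfin
  rw [Finset.card_filter, Finset.card_filter, Finset.card_filter, Finset.card_filter,
    ← Finset.sum_add_distrib, ← Finset.sum_add_distrib]
  apply Finset.sum_congr rfl
  intro j _
  by_cases h1 : j = i
  · subst h1
    simp [(NCGraph s).irrefl, (NCGraph s').irrefl]
  · by_cases h2 : (NCGraph s).Adj i j <;> by_cases h3 : (NCGraph s').Adj i j <;>
      simp [h1, h2, h3]

lemma dagger {n : ℕ} {s s' : Profile n} {i : Fin n} (hv : Valid s)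
    (hd : ∀ j, (NCGraph s).edist i j ≤ 2) (hlt : cost 1 s' i < cost 1 s i) :
    (Zfin s s' i).card + (Wfin s s' i).card + 1 ≤ (Afin s s' i).card + (Tfin s s' i).card := by
  have hc1 := cost_lt_nat hd hlt
  have hc2 := c2_count s s' i
  have a1 : (s i ∩ s' i).card + (s i \ s' i).card = (s i).card :=
    Finset.card_inter_add_card_sdiff _ _
  have a2 : (s' i ∩ s i).card + (s' i \ s i).card = (s' i).card :=
    Finset.card_inter_add_card_sdiff _ _
  have a3 : (Wfin s s' i).card + (Zfin s s' i).card = (s' i \ s i).card :=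
    Finset.card_filter_add_card_filter_not _
  have a4 : (s i ∩ s' i).card = (s' i ∩ s i).card := by rw [Finset.inter_comm]
  have hc4 : (s i \ s' i).card ≤ (Dfin s s' i).card + (Tfin s s' i).card := by
    refine le_trans (Finset.card_le_card ?_) (Finset.card_union_le _ _)
    intro j hj
    have hjs : j ∈ s i := (Finset.mem_sdiff.mp hj).1
    have hjn : j ∉ s' i := (Finset.mem_sdiff.mp hj).2
    have hji : j ≠ i := fun h => hv i (h ▸ hjs)
    have hadj : (NCGraph s).Adj i j := (ncAdj s i j).mpr ⟨hji.symm, Or.inl hjs⟩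
    by_cases hadj' : (NCGraph s').Adj i j
    · refine Finset.mem_union_right _ (Finset.mem_filter.mpr ⟨hj, ?_⟩)
      rcases ((ncAdj s' i j).mp hadj').2 with h | h
      · exact absurd h hjn
      · exact h
    · exact Finset.mem_union_left _ (Finset.mem_filter.mpr ⟨Finset.mem_univ j, hadj, hadj'⟩)
  omega

lemma sum_card_pairs {n : ℕ} (K : Finset (Fin n)) (T : Fin n → Finset (Fin n)) :
    ∑ i ∈ K, (T i).card = ((K ×ˢ (univ : Finset (Fin n))).filter fun p => p.2 ∈ T p.1).card := by
  rw [Finset.card_filter, Finset.sum_product]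
  simp [Finset.card_filter]

lemma backward {n : ℕ} (s : Profile n) (hv : Valid s)
    (hrat : Rational s) (hd : ∀ i j : Fin n, (NCGraph s).edist i j ≤ 2)
    (hforest : (NCGraph s)ᶜ.IsAcyclic) : IsStrongEq 1 s := by
  classical
  intro K s' hKne hv' hagree
  by_contra hno
  push_neg at hno
  have hlt : ∀ i ∈ K, cost 1 s' i < cost 1 s i := hno
  have hdag : ∀ i ∈ K, (Zfin s s' i).card + (Wfin s s' i).card + 1
      ≤ (Afin s s' i).card + (Tfin s s' i).card :=
    fun i hi => dagger hv (hd i) (hlt i hi)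
  have hsums : ∑ i ∈ K, (Zfin s s' i).card + ∑ i ∈ K, (Wfin s s' i).card + K.card
      ≤ ∑ i ∈ K, (Afin s s' i).card + ∑ i ∈ K, (Tfin s s' i).card := by
    have h := Finset.sum_le_sum hdag
    rw [Finset.sum_add_distrib, Finset.sum_add_distrib, Finset.sum_add_distrib,
      Finset.sum_const, smul_eq_mul, mul_one] at h
    exact h
  have hTW : ∑ i ∈ K, (Tfin s s' i).card ≤ ∑ i ∈ K, (Wfin s s' i).card := by
    rw [sum_card_pairs, sum_card_pairs]
    apply Finset.card_le_card_of_injOn (fun p => (p.2, p.1))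
    · rintro ⟨i, j⟩ hp
      rw [Finset.mem_coe, Finset.mem_filter, Finset.mem_product] at hp
      obtain ⟨⟨hiK, -⟩, hjT⟩ := hp
      rw [Tfin, Finset.mem_filter, Finset.mem_sdiff] at hjT
      obtain ⟨⟨hjs, hjns'⟩, his'⟩ := hjT
      have hins : i ∉ s j := hrat i j hjs
      have hjK : j ∈ K := by
        by_contra hjK
        rw [hagree j hjK] at his'
        exact hins his'
      have hji : j ≠ i := fun h => hv i (h ▸ hjs)
      rw [Finset.mem_coe, Finset.mem_filter, Finset.mem_product]
      refine ⟨⟨hjK, Finset.mem_univ i⟩, ?_⟩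
      rw [Wfin, Finset.mem_filter, Finset.mem_sdiff]
      exact ⟨⟨his', hins⟩, (ncAdj s j i).mpr ⟨hji, Or.inr hjs⟩⟩
    · rintro ⟨a, b⟩ - ⟨c, d⟩ - h
      simpa [Prod.ext_iff, and_comm] using h
  set AA := (K ×ˢ (univ : Finset (Fin n))).filter (fun p => p.2 ∈ Afin s s' p.1) with hAA
  set S2 := AA.filter (fun p => p.2 ∉ Zfin s s' p.1) with hS2
  have hsplit : (AA.filter (fun p => p.2 ∈ Zfin s s' p.1)).card + S2.card = AA.card :=
    Finset.card_filter_add_card_filter_not _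
  have hS1 : (AA.filter (fun p => p.2 ∈ Zfin s s' p.1)).card ≤ ∑ i ∈ K, (Zfin s s' i).card := by
    rw [sum_card_pairs]
    apply Finset.card_le_card
    intro p hp
    rw [Finset.mem_filter] at hp
    rw [Finset.mem_filter]
    exact ⟨(Finset.mem_filter.mp hp.1).1, hp.2⟩
  have hAAc : AA.card = ∑ i ∈ K, (Afin s s' i).card := (sum_card_pairs K _).symm
  have hS2K : K.card ≤ S2.card := by omega
  have hg4 : ∀ p ∈ S2, p.1 ∈ K ∧ p.2 ∈ K ∧ p.1 ∈ Zfin s s' p.2 ∧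
      ¬(NCGraph s).Adj p.1 p.2 ∧ p.1 ≠ p.2 := by
    rintro ⟨i, j⟩ hp
    rw [hS2, Finset.mem_filter] at hp
    obtain ⟨hpAA, hjnZ⟩ := hp
    rw [hAA, Finset.mem_filter, Finset.mem_product] at hpAA
    obtain ⟨⟨hiK, -⟩, hjA⟩ := hpAA
    rw [Afin, Finset.mem_filter] at hjA
    obtain ⟨-, hnadj, hadj'⟩ := hjA
    have hne : i ≠ j := hadj'.ne
    have hjnsi : j ∉ s i := fun h => hnadj ((ncAdj s i j).mpr ⟨hne, Or.inl h⟩)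
    have hinsj : i ∉ s j := fun h => hnadj ((ncAdj s i j).mpr ⟨hne, Or.inr h⟩)
    have hins' : i ∈ s' j := by
      rcases ((ncAdj s' i j).mp hadj').2 with h | h
      · exfalso
        apply hjnZ
        rw [Zfin, Finset.mem_filter, Finset.mem_sdiff]
        exact ⟨⟨h, hjnsi⟩, hnadj⟩
      · exact h
    have hjK : j ∈ K := by
      by_contra hjK
      rw [hagree j hjK] at hins'
      exact hinsj hins'
    refine ⟨hiK, hjK, ?_, hnadj, hne⟩
    rw [Zfin, Finset.mem_filter, Finset.mem_sdiff]
    exact ⟨⟨hins', hinsj⟩, fun hadj => hnadj hadj.symm⟩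
  set F := S2.image (fun p => s(p.1, p.2)) with hF
  have hFcard : F.card = S2.card := by
    rw [hF]
    apply Finset.card_image_of_injOn
    rintro ⟨a, b⟩ ha ⟨c, d⟩ hc h
    simp only [Sym2.eq_iff] at h
    rcases h with ⟨rfl, rfl⟩ | ⟨rfl, rfl⟩
    · rfl
    · exfalso
      have h1 := (hg4 _ ha).2.2.1
      have h2 := (Finset.mem_filter.mp (Finset.mem_coe.mp hc)).2
      exact h2 h1
  have hFE : ↑F ⊆ ((NCGraph s)ᶜ).edgeSet := by
    intro e he
    obtain ⟨⟨i, j⟩, hp, rfl⟩ := Finset.mem_image.mp (Finset.mem_coe.mp he)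
    have h4 := hg4 _ hp
    rw [SimpleGraph.mem_edgeSet, SimpleGraph.compl_adj]
    exact ⟨h4.2.2.2.2, h4.2.2.2.1⟩
  have hFK : ∀ e ∈ F, ∀ x ∈ e, x ∈ K := by
    intro e he x hx
    obtain ⟨⟨i, j⟩, hp, rfl⟩ := Finset.mem_image.mp he
    have h4 := hg4 _ hp
    rcases Sym2.mem_iff.mp hx with rfl | rfl
    · exact h4.1
    · exact h4.2.1
  have := forest_count hforest F K hFE hFK hKne
  omega

lemma diam_of_SE {n : ℕ} (hn : 3 ≤ n) (s : Profile n) (hv : Valid s)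
    (hse : IsStrongEq 1 s) : ∀ i j : Fin n, (NCGraph s).edist i j ≤ 2 := by
  classical
  by_contra hcontra
  push_neg at hcontra
  obtain ⟨i, j, hij⟩ := hcontra
  by_cases hcon : ∀ a b : Fin n, (NCGraph s).edist a b ≠ ⊤
  · -- all distances finite, some distance ≥ 3: single-player deviation
    have hne : i ≠ j := by
      rintro rfl
      rw [SimpleGraph.edist_self] at hij
      exact absurd (by norm_num : (0:ℕ∞) ≤ 2) (not_le.mpr hij)
    have hnadj : ¬(NCGraph s).Adj i j := by
      intro h
      rw [SimpleGraph.edist_eq_one_iff_adj.mpr h] at hij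
      exact absurd (by norm_num : (1:ℕ∞) ≤ 2) (not_le.mpr hij)
    have hjnot : j ∉ s i := fun h => hnadj ((ncAdj s i j).mpr ⟨hne, Or.inl h⟩)
    set s' := Function.update s i (insert j (s i)) with hs'
    have hv' : Valid s' := by
      intro k
      by_cases hk : k = i
      · subst hk
        rw [hs', Function.update_self, Finset.mem_insert]
        push_neg
        exact ⟨hne, hv k⟩
      · rw [hs', Function.update_of_ne hk]
        exact hv k
    have hsub : ∀ k, s k ⊆ s' k := by
      intro k
      by_cases hk : k = i
      · subst hk; rw [hs', Function.update_self]; exact Finset.subset_insert _ _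
      · rw [hs', Function.update_of_ne hk]
    have hle := ncMono hsub
    have hadj' : (NCGraph s').Adj i j := by
      refine (ncAdj s' i j).mpr ⟨hne, Or.inl ?_⟩
      rw [hs', Function.update_self]
      exact Finset.mem_insert_self _ _
    have h3 : (3 : ℝ≥0∞) ≤ ((NCGraph s).edist i j : ℝ≥0∞) := by
      have : (3 : ℕ∞) ≤ (NCGraph s).edist i j := by
        exact Order.add_one_le_of_lt hij
      exact_mod_cast this
    have hkey : cost 1 s' i + 1 ≤ cost 1 s i := by
      rw [cost_one, cost_one]
      have hcard : ((s' i).card : ℝ≥0∞) = (s i).card + 1 := by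
        rw [hs', Function.update_self, Finset.card_insert_of_notMem hjnot]
        push_cast; ring
      have hd1 : dCost s' i ≤ 1 + ∑ k ∈ univ.erase j, ((NCGraph s).edist i k : ℝ≥0∞) := by
        unfold dCost
        rw [← Finset.add_sum_erase univ _ (Finset.mem_univ j)]
        refine add_le_add ?_ (Finset.sum_le_sum fun k _ => ?_)
        · rw [SimpleGraph.edist_eq_one_iff_adj.mpr hadj']
          exact le_of_eq ENat.toENNReal_one
        · exact_mod_cast SimpleGraph.edist_anti hle
      have hd2 : dCost s i = ((NCGraph s).edist i j : ℝ≥0∞)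
          + ∑ k ∈ univ.erase j, ((NCGraph s).edist i k : ℝ≥0∞) := by
        unfold dCost
        rw [← Finset.add_sum_erase univ _ (Finset.mem_univ j)]
      calc ((s' i).card : ℝ≥0∞) + dCost s' i + 1
          ≤ ((s i).card + 1) + (1 + ∑ k ∈ univ.erase j, ((NCGraph s).edist i k : ℝ≥0∞)) + 1 := by
            rw [hcard]; exact add_le_add (add_le_add le_rfl hd1) le_rfl
        _ = ((s i).card : ℝ≥0∞) + (3 + ∑ k ∈ univ.erase j, ((NCGraph s).edist i k : ℝ≥0∞)) := by
            ring
        _ ≤ ((s i).card : ℝ≥0∞) + (((NCGraph s).edist i j : ℝ≥0∞)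
              + ∑ k ∈ univ.erase j, ((NCGraph s).edist i k : ℝ≥0∞)) := by gcongr
        _ = ((s i).card : ℝ≥0∞) + dCost s i := by rw [hd2]
    have hfin : cost 1 s i ≠ ⊤ := by
      rw [cost_one]
      refine ENNReal.add_ne_top.mpr ⟨ENNReal.natCast_ne_top _, ?_⟩
      unfold dCost
      rw [← lt_top_iff_ne_top]
      refine ENNReal.sum_lt_top.mpr fun k _ => ?_
      rw [lt_top_iff_ne_top]
      intro hh
      exact hcon i k (ENat.toENNReal_inj.mp (hh.trans ENat.toENNReal_top.symm))
    have hstrict : cost 1 s' i < cost 1 s i := lt_of_add_one_le hkey hfin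
    obtain ⟨k, hk, hck⟩ := hse {i} s' ⟨i, Finset.mem_singleton_self i⟩ hv'
      (fun k hk => Function.update_of_ne (by simpa using hk) _ _)
    rw [Finset.mem_singleton] at hk
    subst hk
    exact absurd hck (not_le.mpr hstrict)
  · -- some distance infinite: deviate to a star
    push_neg at hcon
    obtain ⟨a, b, hab⟩ := hcon
    have hall : ∀ k, cost 1 s k = ⊤ := by
      intro k
      have hex : ∃ l, (NCGraph s).edist k l = ⊤ := by
        by_contra hne
        push_neg at hne
        have h1 := SimpleGraph.edist_triangle (G := NCGraph s) (u := a) (v := k) (w := b)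
        rw [hab] at h1
        have h2 : (NCGraph s).edist a k ≠ ⊤ := by
          rw [SimpleGraph.edist_comm]; exact hne a
        have h3 : (NCGraph s).edist k b ≠ ⊤ := hne b
        exact (WithTop.add_ne_top.mpr ⟨h2, h3⟩) (top_le_iff.mp h1)
      obtain ⟨l, hl⟩ := hex
      rw [cost_one]
      have : dCost s k = ⊤ := by
        unfold dCost
        rw [eq_top_iff]
        calc (⊤ : ℝ≥0∞) = ((NCGraph s).edist k l : ℝ≥0∞) := by rw [hl]; simp
          _ ≤ _ := Finset.single_le_sum (f := fun m => ((NCGraph s).edist k m : ℝ≥0∞))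
              (fun m _ => zero_le) (Finset.mem_univ l)
      rw [this, add_top]
    set star : Profile n := fun k => if k = a then ∅ else {a} with hstar
    have hvstar : Valid star := by
      intro k
      rw [hstar]
      by_cases hk : k = a
      · simp [hk]
      · simp [hk]
    have hadjstar : ∀ x : Fin n, x ≠ a → (NCGraph star).Adj x a := by
      intro x hx
      refine (ncAdj star x a).mpr ⟨hx, Or.inl ?_⟩
      rw [hstar]
      simp [hx]
    have hdiststar : ∀ x y : Fin n, (NCGraph star).edist x y ≤ 2 := by
      have hda : ∀ x : Fin n, (NCGraph star).edist x a ≤ 1 := by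
        intro x
        by_cases hx : x = a
        · subst hx; rw [SimpleGraph.edist_self]; norm_num
        · rw [SimpleGraph.edist_eq_one_iff_adj.mpr (hadjstar x hx)]
      intro x y
      calc (NCGraph star).edist x y ≤ (NCGraph star).edist x a + (NCGraph star).edist a y :=
            SimpleGraph.edist_triangle
        _ ≤ 1 + 1 := by
            refine add_le_add (hda x) ?_
            rw [SimpleGraph.edist_comm]
            exact hda y
        _ = 2 := by norm_num
    have hcoststar : ∀ k, cost 1 star k ≠ ⊤ := fun k => cost_fin (hdiststar k)
    obtain ⟨k, -, hck⟩ := hse univ star ⟨⟨0, by omega⟩, Finset.mem_univ _⟩ hvstar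
      (fun k hk => absurd (Finset.mem_univ k) hk)
    rw [hall k] at hck
    exact hcoststar k (top_le_iff.mp hck)

lemma rational_of_SE {n : ℕ} (s : Profile n) (hv : Valid s)
    (hse : IsStrongEq 1 s) (hd : ∀ i j : Fin n, (NCGraph s).edist i j ≤ 2) :
    Rational s := by
  classical
  intro i j hji hij
  -- hji : j ∈ s i, hij : i ∈ s j
  have hne : i ≠ j := fun h => hv i (by rw [h] at hji ⊢; exact hji)
  set s' := Function.update s i ((s i).erase j) with hs'
  have hv' : Valid s' := by
    intro k
    by_cases hk : k = i
    · subst hk; rw [hs', Function.update_self]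
      exact fun h => hv k (Finset.mem_of_mem_erase h)
    · rw [hs', Function.update_of_ne hk]; exact hv k
  have hgeq : NCGraph s' = NCGraph s := by
    ext a b
    rw [ncAdj, ncAdj]
    constructor
    · rintro ⟨hab, h | h⟩
      · refine ⟨hab, Or.inl ?_⟩
        by_cases ha : a = i
        · subst ha; rw [hs', Function.update_self] at h
          exact Finset.mem_of_mem_erase h
        · rwa [hs', Function.update_of_ne ha] at h
      · refine ⟨hab, Or.inr ?_⟩
        by_cases hb : b = i
        · subst hb; rw [hs', Function.update_self] at h
          exact Finset.mem_of_mem_erase h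
        · rwa [hs', Function.update_of_ne hb] at h
    · rintro ⟨hab, h | h⟩
      · by_cases ha : a = i
        · subst ha
          by_cases hbj : b = j
          · subst hbj
            exact ⟨hab, Or.inr (by rw [hs', Function.update_of_ne hne.symm]; exact hij)⟩
          · exact ⟨hab, Or.inl (by rw [hs', Function.update_self]; exact Finset.mem_erase.mpr ⟨hbj, h⟩)⟩
        · exact ⟨hab, Or.inl (by rw [hs', Function.update_of_ne ha]; exact h)⟩
      · by_cases hb : b = i
        · subst hb
          by_cases haj : a = j
          · subst haj
            exact ⟨hab, Or.inl (by rw [hs', Function.update_of_ne hne.symm]; exact hij)⟩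
          · exact ⟨hab, Or.inr (by rw [hs', Function.update_self]; exact Finset.mem_erase.mpr ⟨haj, h⟩)⟩
        · exact ⟨hab, Or.inr (by rw [hs', Function.update_of_ne hb]; exact h)⟩
  have hdeq : dCost s' i = dCost s i := by
    unfold dCost
    rw [hgeq]
  have hkey : cost 1 s' i + 1 ≤ cost 1 s i := by
    rw [cost_one, cost_one, hdeq, hs', Function.update_self,
      Finset.card_erase_of_mem hji]
    refine le_of_eq ?_
    have hb1 : 1 ≤ (s i).card := Finset.card_pos.mpr ⟨j, hji⟩
    have hcast : (((s i).card - 1 : ℕ) : ℝ≥0∞) + 1 = (s i).card := by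
      have h := (by omega : (s i).card - 1 + 1 = (s i).card)
      exact_mod_cast h
    calc (((s i).card - 1 : ℕ) : ℝ≥0∞) + dCost s i + 1
        = ((((s i).card - 1 : ℕ) : ℝ≥0∞) + 1) + dCost s i := by ring
      _ = ((s i).card : ℝ≥0∞) + dCost s i := by rw [hcast]
  have hstrict : cost 1 s' i < cost 1 s i := lt_of_add_one_le hkey (cost_fin (hd i))
  obtain ⟨k, hk, hck⟩ := hse {i} s' ⟨i, Finset.mem_singleton_self i⟩ hv'
    (fun k hk => Function.update_of_ne (by simpa using hk) _ _)
  rw [Finset.mem_singleton] at hk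
  subst hk
  exact absurd hck (not_le.mpr hstrict)

lemma acyclic_of_SE {n : ℕ} (s : Profile n) (hv : Valid s)
    (hse : IsStrongEq 1 s) (hd : ∀ i j : Fin n, (NCGraph s).edist i j ≤ 2) :
    ((NCGraph s)ᶜ).IsAcyclic := by
  classical
  by_contra hcyc
  obtain ⟨K, f, g, hKne, hprop⟩ := cyc_extract hcyc
  set s' : Profile n := fun x => if x ∈ K then insert (f x) (s x) else s x with hs'
  have hfx_ne : ∀ x ∈ K, f x ≠ x := fun x hx => ((hprop x hx).2.2.1).ne'
  have hv' : Valid s' := by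
    intro k
    by_cases hk : k ∈ K
    · simp only [hs', if_pos hk, Finset.mem_insert]
      push_neg
      exact ⟨(hfx_ne k hk).symm, hv k⟩
    · simp only [hs', if_neg hk]; exact hv k
  have hsub : ∀ x, s x ⊆ s' x := by
    intro x
    by_cases hx : x ∈ K
    · simp only [hs', if_pos hx]; exact Finset.subset_insert _ _
    · simp only [hs', if_neg hx]; exact Finset.Subset.refl _
  have hle := ncMono hsub
  have hstrict : ∀ x ∈ K, cost 1 s' x < cost 1 s x := by
    intro x hx
    obtain ⟨hfK, hgK, hadjc, hfg, hgf, hfgne⟩ := hprop x hx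
    rw [SimpleGraph.compl_adj] at hadjc
    obtain ⟨hxf_ne, hxf_nadj⟩ := hadjc
    have hadjc2 : ((NCGraph s)ᶜ).Adj (g x) (f (g x)) := (hprop (g x) hgK).2.2.1
    rw [hfg, SimpleGraph.compl_adj] at hadjc2
    obtain ⟨hgx_ne, hgx_nadj⟩ := hadjc2
    have hxg_ne : x ≠ g x := hgx_ne.symm
    have hxg_nadj : ¬(NCGraph s).Adj x (g x) := fun h => hgx_nadj h.symm
    have hdxf : (NCGraph s).edist x (f x) = 2 := edist_two hxf_ne hxf_nadj (hd x (f x))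
    have hdxg : (NCGraph s).edist x (g x) = 2 := edist_two hxg_ne hxg_nadj (hd x (g x))
    have hadj'f : (NCGraph s').Adj x (f x) := by
      refine (ncAdj s' x (f x)).mpr ⟨hxf_ne, Or.inl ?_⟩
      simp only [hs', if_pos hx]
      exact Finset.mem_insert_self _ _
    have hadj'g : (NCGraph s').Adj x (g x) := by
      refine (ncAdj s' x (g x)).mpr ⟨hxg_ne, Or.inr ?_⟩
      simp only [hs', if_pos hgK]
      rw [hfg]
      exact Finset.mem_insert_self _ _
    have hfnotin : f x ∉ s x := fun h => hxf_nadj ((ncAdj s x (f x)).mpr ⟨hxf_ne, Or.inl h⟩)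
    have hcard : ((s' x).card : ℝ≥0∞) = (s x).card + 1 := by
      simp only [hs', if_pos hx]
      rw [Finset.card_insert_of_notMem hfnotin]
      push_cast; ring
    have hkey : cost 1 s' x + 1 ≤ cost 1 s x := by
      rw [cost_one, cost_one]
      have hsplit1 : dCost s x = ((NCGraph s).edist x (f x) : ℝ≥0∞)
          + ((NCGraph s).edist x (g x) : ℝ≥0∞)
          + ∑ k ∈ (univ.erase (f x)).erase (g x), ((NCGraph s).edist x k : ℝ≥0∞) :=
        split2 _ hfgne
      have hsplit2e : dCost s' x = ((NCGraph s').edist x (f x) : ℝ≥0∞)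
          + ((NCGraph s').edist x (g x) : ℝ≥0∞)
          + ∑ k ∈ (univ.erase (f x)).erase (g x), ((NCGraph s').edist x k : ℝ≥0∞) :=
        split2 _ hfgne
      have hsplit2 : dCost s' x ≤ 1 + 1
          + ∑ k ∈ (univ.erase (f x)).erase (g x), ((NCGraph s).edist x k : ℝ≥0∞) := by
        rw [hsplit2e, SimpleGraph.edist_eq_one_iff_adj.mpr hadj'f,
          SimpleGraph.edist_eq_one_iff_adj.mpr hadj'g]
        refine add_le_add (add_le_add ?_ ?_) (Finset.sum_le_sum fun k _ => ?_)
        · exact le_of_eq ENat.toENNReal_one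
        · exact le_of_eq ENat.toENNReal_one
        · exact_mod_cast SimpleGraph.edist_anti hle
      calc ((s' x).card : ℝ≥0∞) + dCost s' x + 1
          ≤ ((s x).card + 1) + (1 + 1
              + ∑ k ∈ (univ.erase (f x)).erase (g x), ((NCGraph s).edist x k : ℝ≥0∞)) + 1 := by
            rw [hcard]; exact add_le_add (add_le_add le_rfl hsplit2) le_rfl
        _ = ((s x).card : ℝ≥0∞) + (2 + 2
              + ∑ k ∈ (univ.erase (f x)).erase (g x), ((NCGraph s).edist x k : ℝ≥0∞)) := by ring
        _ = ((s x).card : ℝ≥0∞) + dCost s x := by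
            rw [hsplit1, hdxf, hdxg]
            norm_num
    exact lt_of_add_one_le hkey (cost_fin (hd x))
  obtain ⟨k, hk, hck⟩ := hse K s' hKne hv' (fun k hk => by simp only [hs', if_neg hk])
  exact absurd hck (not_le.mpr (hstrict k hk))

end Aux

/-- For `α = 1`, a profile is a strong equilibrium iff it is rational, the graph
has diameter at most `2`, and the complement of the graph is a forest. -/
theorem stmt7 {n : ℕ} (hn : 3 ≤ n) (s : Profile n) (hv : Valid s) :
    IsStrongEq 1 s ↔
      Rational s ∧ (∀ i j : Fin n, (NCGraph s).edist i j ≤ 2) ∧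
        (NCGraph s)ᶜ.IsAcyclic := by
  constructor
  · intro hse
    have hd := diam_of_SE hn s hv hse
    exact ⟨rational_of_SE s hv hse hd, hd, acyclic_of_SE s hv hse hd⟩
  · rintro ⟨hrat, hd, hforest⟩
    exact backward s hv hrat hd hforest
end

section
/- In a network creation game with α ∈ (1,2) and n ≥ 5, no strong equilibrium exists. -/
open SimpleGraph ENNReal Finset

section B
variable {n : ℕ}

lemma ncadj (s : Profile n) {i j : Fin n} :
    (NCGraph s).Adj i j ↔ i ≠ j ∧ (j ∈ s i ∨ i ∈ s j) :=
  SimpleGraph.fromRel_adj _ i j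

lemma nc_le {s t : Profile n} (h : ∀ i, s i ⊆ t i) : NCGraph s ≤ NCGraph t := by
  intro i j hij
  rw [ncadj] at hij ⊢
  exact ⟨hij.1, hij.2.imp (fun h' => h _ h') (fun h' => h _ h')⟩

lemma cast_le_cast {e f : ℕ∞} (h : e ≤ f) : (e : ℝ≥0∞) ≤ (f : ℝ≥0∞) :=
  ENat.toENNReal_le.2 h

lemma cast_le_one' {e : ℕ∞} (h : e ≤ 1) : (e : ℝ≥0∞) ≤ 1 := by
  simpa using cast_le_cast h

lemma two_le_cast' {e : ℕ∞} (h : 2 ≤ e) : 2 ≤ (e : ℝ≥0∞) := by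
  simpa using cast_le_cast h

lemma three_le_cast' {e : ℕ∞} (h : 3 ≤ e) : 3 ≤ (e : ℝ≥0∞) := by
  simpa using cast_le_cast h

lemma one_le_cast' {e : ℕ∞} (h : 1 ≤ e) : 1 ≤ (e : ℝ≥0∞) := by
  simpa using cast_le_cast h

lemma cast_le_two' {e : ℕ∞} (h : e ≤ 2) : (e : ℝ≥0∞) ≤ 2 := by
  simpa using cast_le_cast h

/-- glue: from `a + c₂ ≤ b + c₁`, `c₁ < c₂`, conclude `a < b`. -/
lemma improve_lt {a b c1 c2 : ℝ≥0∞} (h : a + c2 ≤ b + c1) (h12 : c1 < c2)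
    (hb : b ≠ ⊤) (h2 : c2 ≠ ⊤) : a < b := by
  have h' : a + c2 < b + c2 := lt_of_le_of_lt h (ENNReal.add_lt_add_left hb h12)
  exact (ENNReal.add_lt_add_iff_right h2).1 h'

lemma sum_special1 {f f' : Fin n → ℝ≥0∞} {b : Fin n} {c : ℝ≥0∞}
    (hle : ∀ x, f' x ≤ f x) (hb : f' b + c ≤ f b) :
    (∑ x, f' x) + c ≤ ∑ x, f x := by
  rw [← Finset.sum_erase_add univ f (mem_univ b), ← Finset.sum_erase_add univ f' (mem_univ b),
    add_assoc]
  exact add_le_add (Finset.sum_le_sum fun x _ => hle x) hb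

lemma sum_special2 {f f' : Fin n → ℝ≥0∞} {b c : Fin n} (hbc : b ≠ c)
    (hle : ∀ x, f' x ≤ f x) (hb : f' b + 1 ≤ f b) (hc : f' c + 1 ≤ f c) :
    (∑ x, f' x) + 2 ≤ ∑ x, f x := by
  have hcb : c ∈ univ.erase b := Finset.mem_erase.2 ⟨Ne.symm hbc, mem_univ c⟩
  rw [← Finset.sum_erase_add univ f (mem_univ b), ← Finset.sum_erase_add univ f' (mem_univ b),
    ← Finset.sum_erase_add _ f hcb, ← Finset.sum_erase_add _ f' hcb]
  have : (∑ x ∈ (univ.erase b).erase c, f' x) + f' c + f' b + 2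
      = (∑ x ∈ (univ.erase b).erase c, f' x) + (f' c + 1) + (f' b + 1) := by ring
  rw [this]
  exact add_le_add (add_le_add (Finset.sum_le_sum fun x _ => hle x) hc) hb

lemma sum_le_sum_add1 {f f' : Fin n → ℝ≥0∞} {b : Fin n}
    (hle : ∀ x, x ≠ b → f' x ≤ f x) (hb : f' b ≤ f b + 1) :
    (∑ x, f' x) ≤ (∑ x, f x) + 1 := by
  rw [← Finset.sum_erase_add univ f (mem_univ b), ← Finset.sum_erase_add univ f' (mem_univ b),
    add_assoc]
  refine add_le_add (Finset.sum_le_sum fun x hx => hle x (Finset.mem_erase.1 hx).1) hb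

lemma cost_ne_top {α : ℝ} {s : Profile n} {i : Fin n}
    (h : ∀ j, (NCGraph s).edist i j ≠ ⊤) : cost α s i ≠ ⊤ := by
  rw [cost]
  refine ENNReal.add_ne_top.2 ⟨ENNReal.mul_ne_top ENNReal.ofReal_ne_top (by simp), ?_⟩
  rw [dCost]
  exact (ENNReal.sum_lt_top.2 fun j _ => lt_top_iff_ne_top.2 (by rw [Ne, ← ENat.toENNReal_top, ENat.toENNReal_inj]; exact h j)).ne

lemma ofReal_lt_two {α : ℝ} (h : α < 2) : ENNReal.ofReal α < 2 := by
  calc ENNReal.ofReal α < ENNReal.ofReal 2 := by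
        exact (ENNReal.ofReal_lt_ofReal_iff (by norm_num)).2 h
  _ = 2 := by norm_num

lemma one_lt_ofReal {α : ℝ} (h : 1 < α) : (1 : ℝ≥0∞) < ENNReal.ofReal α := by
  rw [← ENNReal.ofReal_one]
  exact (ENNReal.ofReal_lt_ofReal_iff (by linarith)).2 h

end B

section A
variable {V : Type*} {G : SimpleGraph V} {u v w : V}

lemma edist_le_one_of_adj (h : G.Adj u v) : G.edist u v ≤ 1 :=
  (SimpleGraph.edist_eq_one_iff_adj.2 h).le

lemma two_le_edist_of (hne : u ≠ v) (hna : ¬ G.Adj u v) : 2 ≤ G.edist u v := by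
  by_contra h
  push_neg at h
  have hnt : G.edist u v ≠ ⊤ := by
    intro ht
    rw [ht] at h
    exact absurd h (by simp)
  obtain ⟨p, hp⟩ := SimpleGraph.exists_walk_of_edist_ne_top hnt
  rw [← hp] at h
  have hl : p.length < 2 := by exact_mod_cast h
  interval_cases hpl : p.length
  · exact hne (SimpleGraph.Walk.eq_of_length_eq_zero hpl)
  · exact hna (SimpleGraph.Walk.adj_of_length_eq_one hpl)

lemma edist_le_two_of_common (h1 : G.Adj u w) (h2 : G.Adj w v) : G.edist u v ≤ 2 := by
  calc G.edist u v ≤ G.edist u w + G.edist w v := SimpleGraph.edist_triangle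
  _ ≤ 1 + 1 := add_le_add (edist_le_one_of_adj h1) (edist_le_one_of_adj h2)
  _ = 2 := by norm_num

lemma exists_common_of_edist_eq_two (h : G.edist u v = 2) :
    ∃ w, G.Adj u w ∧ G.Adj w v := by
  obtain ⟨p, hp⟩ := SimpleGraph.exists_walk_of_edist_eq_coe (k := 2) (by exact_mod_cast h)
  match p, hp with
  | SimpleGraph.Walk.cons h' q, hp =>
    exact ⟨_, h', q.adj_of_length_eq_one (by simpa using hp)⟩
end A


section D
variable {n : ℕ} {α : ℝ} {s : Profile n}

lemma cycle_dev (hα2 : α < 2) (hv : Valid s) (hse : IsStrongEq α s)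
    (hfin : ∀ i j : Fin n, (NCGraph s).edist i j ≠ ⊤)
    (K : Finset (Fin n)) (hK : K.Nonempty) (nxt : Fin n → Fin n)
    (hcyc : ∀ i ∈ K, nxt i ≠ i ∧ ¬ (NCGraph s).Adj i (nxt i))
    (hpred : ∀ i ∈ K, ∃ j ∈ K, nxt j = i ∧ j ≠ nxt i) : False := by
  classical
  set s' : Profile n := fun i => if i ∈ K then insert (nxt i) (s i) else s i with hs'
  have hsub : ∀ i, s i ⊆ s' i := by
    intro i
    by_cases hi : i ∈ K <;> simp [hs', hi, Finset.subset_insert]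
  have hmono := nc_le hsub
  have hVal : Valid s' := by
    intro i
    by_cases hi : i ∈ K
    · simp only [hs', if_pos hi, Finset.mem_insert]
      push_neg
      exact ⟨fun h => (hcyc i hi).1 h.symm, hv i⟩
    · simpa [hs', if_neg hi] using hv i
  have hout : ∀ i ∉ K, s' i = s i := fun i hi => by simp [hs', if_neg hi]
  obtain ⟨i, hiK, hle⟩ := hse K s' hK hVal hout
  obtain ⟨j, hjK, hji, hjne⟩ := hpred i hiK
  have hins : s' i = insert (nxt i) (s i) := by simp [hs', if_pos hiK]
  have hinsj : s' j = insert (nxt j) (s j) := by simp [hs', if_pos hjK]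
  have hij : i ≠ j := fun h => (hcyc j hjK).1 (hji.trans h)
  have hadj1 : (NCGraph s').Adj i (nxt i) := by
    rw [ncadj]
    exact ⟨Ne.symm (hcyc i hiK).1, Or.inl (by rw [hins]; exact Finset.mem_insert_self _ _)⟩
  have hadj2 : (NCGraph s').Adj i j := by
    rw [ncadj]
    refine ⟨hij, Or.inr ?_⟩
    rw [hinsj, hji]
    exact Finset.mem_insert_self _ _
  have hb : ((NCGraph s').edist i (nxt i) : ℝ≥0∞) + 1
      ≤ ((NCGraph s).edist i (nxt i) : ℝ≥0∞) := by
    have h1 : ((NCGraph s').edist i (nxt i) : ℝ≥0∞) ≤ 1 :=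
      cast_le_one' (edist_le_one_of_adj hadj1)
    have h2' : (2:ℝ≥0∞) ≤ ((NCGraph s).edist i (nxt i) : ℝ≥0∞) :=
      two_le_cast' (two_le_edist_of (Ne.symm (hcyc i hiK).1) (hcyc i hiK).2)
    calc ((NCGraph s').edist i (nxt i) : ℝ≥0∞) + 1 ≤ (1:ℝ≥0∞) + 1 := add_le_add_left h1 _
    _ = 2 := by norm_num
    _ ≤ _ := h2'
  have hc : ((NCGraph s').edist i j : ℝ≥0∞) + 1 ≤ ((NCGraph s).edist i j : ℝ≥0∞) := by
    have h1 : ((NCGraph s').edist i j : ℝ≥0∞) ≤ 1 := cast_le_one' (edist_le_one_of_adj hadj2)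
    have hna : ¬ (NCGraph s).Adj i j := fun h => (hcyc j hjK).2 (by rw [hji]; exact h.symm)
    have h2' : (2:ℝ≥0∞) ≤ ((NCGraph s).edist i j : ℝ≥0∞) :=
      two_le_cast' (two_le_edist_of hij hna)
    calc ((NCGraph s').edist i j : ℝ≥0∞) + 1 ≤ (1:ℝ≥0∞) + 1 := add_le_add_left h1 _
    _ = 2 := by norm_num
    _ ≤ _ := h2'
  have hle' : ∀ x, ((NCGraph s').edist i x : ℝ≥0∞) ≤ ((NCGraph s).edist i x : ℝ≥0∞) :=
    fun x => cast_le_cast (SimpleGraph.edist_anti hmono)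
  have hsum : dCost s' i + 2 ≤ dCost s i := by
    rw [dCost, dCost]
    exact sum_special2 (Ne.symm hjne) hle' hb hc
  have hcard : ((s' i).card : ℝ≥0∞) ≤ ((s i).card : ℝ≥0∞) + 1 := by
    rw [hins]
    exact_mod_cast Nat.cast_le.2 (Finset.card_insert_le _ _)
  have hedge : ENNReal.ofReal α * (s' i).card ≤ ENNReal.ofReal α * (s i).card
      + ENNReal.ofReal α := by
    calc ENNReal.ofReal α * (s' i).card ≤ ENNReal.ofReal α * (((s i).card : ℝ≥0∞) + 1) :=
      mul_le_mul_right hcard _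
    _ = ENNReal.ofReal α * (s i).card + ENNReal.ofReal α := by rw [mul_add, mul_one]
  have hfinal : cost α s' i + 2 ≤ cost α s i + ENNReal.ofReal α := by
    calc cost α s' i + 2
        = ENNReal.ofReal α * (s' i).card + (dCost s' i + 2) := by rw [cost]; ring
    _ ≤ (ENNReal.ofReal α * (s i).card + ENNReal.ofReal α) + dCost s i := add_le_add hedge hsum
    _ = cost α s i + ENNReal.ofReal α := by rw [cost]; ring
  have hlt := improve_lt hfinal (ofReal_lt_two hα2) (cost_ne_top (hfin i)) (by norm_num)
  exact absurd hle (not_le.2 hlt)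

end D

section E
variable {n : ℕ} {α : ℝ} {s : Profile n}

lemma fin_of_se (hse : IsStrongEq α s) (hv : Valid s) :
    ∀ i j : Fin n, (NCGraph s).edist i j ≠ ⊤ := by
  by_contra h
  push_neg at h
  obtain ⟨i, j, hij⟩ := h
  classical
  set s' := Function.update s i (univ.erase i) with hs'
  have hVal : Valid s' := by
    intro k
    by_cases hk : k = i
    · subst hk; simp [hs']
    · rw [hs', Function.update_of_ne hk]; exact hv k
  have hout : ∀ k ∉ ({i} : Finset (Fin n)), s' k = s k := by
    intro k hk
    simp only [Finset.mem_singleton] at hk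
    rw [hs', Function.update_of_ne hk]
  obtain ⟨k, hk, hle⟩ := hse {i} s' ⟨i, by simp⟩ hVal hout
  simp only [Finset.mem_singleton] at hk
  subst hk
  have htop : cost α s k = ⊤ := by
    rw [cost, dCost]
    rw [ENNReal.add_eq_top]
    right
    exact ENNReal.sum_eq_top.2 ⟨j, mem_univ j, by rw [hij]; simp⟩
  have hne : cost α s' k ≠ ⊤ := by
    apply cost_ne_top
    intro x
    by_cases hx : x = k
    · subst hx; simp [SimpleGraph.edist_self]
    · have hadj : (NCGraph s').Adj k x := by
        rw [ncadj]
        refine ⟨Ne.symm hx, Or.inl ?_⟩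
        rw [hs', Function.update_self]
        exact Finset.mem_erase.2 ⟨hx, mem_univ x⟩
      exact ne_top_of_le_ne_top (by simp) (edist_le_one_of_adj hadj)
  rw [htop] at hle
  exact hne (top_le_iff.1 hle)

lemma diam_of_se (hα2 : α < 2) (hse : IsStrongEq α s) (hv : Valid s)
    (hfin : ∀ i j : Fin n, (NCGraph s).edist i j ≠ ⊤) :
    ∀ i j : Fin n, (NCGraph s).edist i j ≤ 2 := by
  by_contra h
  push_neg at h
  obtain ⟨i, j, hij⟩ := h
  have hne : i ≠ j := by
    rintro rfl
    rw [SimpleGraph.edist_self] at hij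
    exact absurd hij (by simp)
  classical
  set s' := Function.update (Function.update s i (insert j (s i))) j (insert i (s j)) with hs'
  have hsi : s' i = insert j (s i) := by
    rw [hs', Function.update_of_ne hne, Function.update_self]
  have hsj : s' j = insert i (s j) := by rw [hs', Function.update_self]
  have hselse : ∀ k, k ≠ i → k ≠ j → s' k = s k := by
    intro k hki hkj
    rw [hs', Function.update_of_ne hkj, Function.update_of_ne hki]
  have hsub : ∀ k, s k ⊆ s' k := by
    intro k
    by_cases hki : k = i
    · subst hki; rw [hsi]; exact Finset.subset_insert _ _
    · by_cases hkj : k = j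
      · subst hkj; rw [hsj]; exact Finset.subset_insert _ _
      · rw [hselse k hki hkj]
  have hmono := nc_le hsub
  have hVal : Valid s' := by
    intro k
    by_cases hki : k = i
    · subst hki; rw [hsi]
      simp only [Finset.mem_insert]
      push_neg
      exact ⟨hne, hv k⟩
    · by_cases hkj : k = j
      · subst hkj; rw [hsj]
        simp only [Finset.mem_insert]
        push_neg
        exact ⟨Ne.symm hne, hv k⟩
      · rw [hselse k hki hkj]; exact hv k
  have hout : ∀ k ∉ ({i, j} : Finset (Fin n)), s' k = s k := by
    intro k hk
    simp only [Finset.mem_insert, Finset.mem_singleton] at hk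
    push_neg at hk
    exact hselse k hk.1 hk.2
  have h3 : (3:ℕ∞) ≤ (NCGraph s).edist i j := by
    have := Order.add_one_le_of_lt hij
    calc (3:ℕ∞) = 2 + 1 := by norm_num
    _ ≤ _ := this
  have hadj : (NCGraph s').Adj i j := by
    rw [ncadj]
    exact ⟨hne, Or.inl (by rw [hsi]; exact Finset.mem_insert_self _ _)⟩
  have key : ∀ u w : Fin n, s' u = insert w (s u) → (3:ℕ∞) ≤ (NCGraph s).edist u w →
      (NCGraph s').Adj u w → cost α s' u < cost α s u := by
    intro u w hins h3' hadj'
    have hb : ((NCGraph s').edist u w : ℝ≥0∞) + 2 ≤ ((NCGraph s).edist u w : ℝ≥0∞) := by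
      have h1 : ((NCGraph s').edist u w : ℝ≥0∞) ≤ 1 := cast_le_one' (edist_le_one_of_adj hadj')
      calc ((NCGraph s').edist u w : ℝ≥0∞) + 2 ≤ (1:ℝ≥0∞) + 2 := add_le_add_left h1 _
      _ = 3 := by norm_num
      _ ≤ _ := three_le_cast' h3'
    have hle' : ∀ x, ((NCGraph s').edist u x : ℝ≥0∞) ≤ ((NCGraph s).edist u x : ℝ≥0∞) :=
      fun x => cast_le_cast (SimpleGraph.edist_anti hmono)
    have hsum : dCost s' u + 2 ≤ dCost s u := by
      rw [dCost, dCost]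
      exact sum_special1 hle' hb
    have hcard : ((s' u).card : ℝ≥0∞) ≤ ((s u).card : ℝ≥0∞) + 1 := by
      rw [hins]
      exact_mod_cast Nat.cast_le.2 (Finset.card_insert_le _ _)
    have hedge : ENNReal.ofReal α * (s' u).card ≤ ENNReal.ofReal α * (s u).card
        + ENNReal.ofReal α := by
      calc ENNReal.ofReal α * (s' u).card ≤ ENNReal.ofReal α * (((s u).card : ℝ≥0∞) + 1) :=
        mul_le_mul_right hcard _
      _ = ENNReal.ofReal α * (s u).card + ENNReal.ofReal α := by rw [mul_add, mul_one]
    have hfinal : cost α s' u + 2 ≤ cost α s u + ENNReal.ofReal α := by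
      calc cost α s' u + 2
          = ENNReal.ofReal α * (s' u).card + (dCost s' u + 2) := by rw [cost]; ring
      _ ≤ (ENNReal.ofReal α * (s u).card + ENNReal.ofReal α) + dCost s u := add_le_add hedge hsum
      _ = cost α s u + ENNReal.ofReal α := by rw [cost]; ring
    exact improve_lt hfinal (ofReal_lt_two hα2) (cost_ne_top (hfin u)) (by norm_num)
  obtain ⟨k, hk, hle⟩ := hse {i, j} s' ⟨i, by simp⟩ hVal hout
  simp only [Finset.mem_insert, Finset.mem_singleton] at hk
  rcases hk with rfl | rfl
  · exact absurd hle (not_le.2 (key k j hsi h3 hadj))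
  · refine absurd hle (not_le.2 (key k i hsj ?_ hadj.symm))
    rwa [SimpleGraph.edist_comm]

lemma rat_of_se (hα1 : 1 < α) (hse : IsStrongEq α s) (hv : Valid s)
    (hfin : ∀ i j : Fin n, (NCGraph s).edist i j ≠ ⊤) :
    ∀ i j : Fin n, j ∈ s i → i ∉ s j := by
  by_contra h
  push_neg at h
  obtain ⟨i, j, hij, hji⟩ := h
  classical
  set s' := Function.update s i ((s i).erase j) with hs'
  have hsi : s' i = (s i).erase j := by rw [hs', Function.update_self]
  have hne : i ≠ j := fun h => hv i (h ▸ hij)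
  have hVal : Valid s' := by
    intro k
    by_cases hk : k = i
    · subst hk; rw [hsi]
      exact fun hm => hv k (Finset.mem_of_mem_erase hm)
    · rw [hs', Function.update_of_ne hk]; exact hv k
  have hout : ∀ k ∉ ({i} : Finset (Fin n)), s' k = s k := by
    intro k hk
    simp only [Finset.mem_singleton] at hk
    rw [hs', Function.update_of_ne hk]
  have hmem : ∀ a b : Fin n, (b ∈ s' a ∨ a ∈ s' b) ↔ (b ∈ s a ∨ a ∈ s b) := by
    intro a b
    by_cases ha : a = i
    · subst ha
      by_cases hb : b = a
      · subst hb
        rw [hsi]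
        simp only [Finset.mem_erase]
        tauto
      · rw [hsi, hs', Function.update_of_ne hb]
        by_cases hbj : b = j
        · subst hbj
          simp [Finset.mem_erase, hji]
        · simp [Finset.mem_erase, hbj]
    · by_cases hb : b = i
      · subst hb
        rw [hsi, hs', Function.update_of_ne ha]
        by_cases haj : a = j
        · subst haj
          simp [Finset.mem_erase, hji, hij]
        · simp [Finset.mem_erase, haj]
      · rw [hs', Function.update_of_ne ha, Function.update_of_ne hb]
  have hGeq : NCGraph s' = NCGraph s := by
    ext a b
    rw [ncadj, ncadj]
    exact and_congr_right fun _ => hmem a b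
  obtain ⟨k, hk, hle⟩ := hse {i} s' ⟨i, by simp⟩ hVal hout
  simp only [Finset.mem_singleton] at hk
  subst hk
  have hDeq : dCost s' k = dCost s k := by rw [dCost, dCost, hGeq]
  have hcadd : ((s' k).card : ℝ≥0∞) + 1 = ((s k).card : ℝ≥0∞) := by
    rw [hsi]
    exact_mod_cast congrArg (Nat.cast (R := ℝ≥0∞)) (Finset.card_erase_add_one hij)
  have heq : cost α s' k + ENNReal.ofReal α = cost α s k + 0 := by
    rw [cost, cost, hDeq, add_zero]
    calc ENNReal.ofReal α * (s' k).card + dCost s k + ENNReal.ofReal α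
        = ENNReal.ofReal α * (((s' k).card : ℝ≥0∞) + 1) + dCost s k := by ring
    _ = ENNReal.ofReal α * (s k).card + dCost s k := by rw [hcadd]
  have hlt := improve_lt heq.le (ENNReal.ofReal_pos.2 (by linarith)) (cost_ne_top (hfin k))
    ENNReal.ofReal_ne_top
  exact absurd hle (not_le.2 hlt)

end E

section F
variable {n : ℕ} {α : ℝ} {s : Profile n}

def Wit {n : ℕ} (s : Profile n) (u v x : Fin n) : Prop :=
  ¬ (NCGraph s).Adj u x ∧ x ≠ u ∧ (∃ z, (NCGraph s).Adj u z ∧ (NCGraph s).Adj z x) ∧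
    ∀ z, (NCGraph s).Adj u z → (NCGraph s).Adj z x → z = v

lemma witness_of_se (hα1 : 1 < α) (hse : IsStrongEq α s) (hv : Valid s)
    (hfin : ∀ i j : Fin n, (NCGraph s).edist i j ≠ ⊤)
    (hdiam : ∀ i j : Fin n, (NCGraph s).edist i j ≤ 2)
    {u v w : Fin n} (hbuy : v ∈ s u)
    (huw : (NCGraph s).Adj u w) (hwv : (NCGraph s).Adj w v) :
    ∃ x, Wit s u v x := by
  by_contra hno
  push_neg at hno
  classical
  set s' := Function.update s u ((s u).erase v) with hs'
  have hsu : s' u = (s u).erase v := by rw [hs', Function.update_self]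
  have huv_ne : u ≠ v := fun h => hv u (h ▸ hbuy)
  have hVal : Valid s' := by
    intro k
    by_cases hk : k = u
    · subst hk; rw [hsu]
      exact fun hm => hv k (Finset.mem_of_mem_erase hm)
    · rw [hs', Function.update_of_ne hk]; exact hv k
  have hout : ∀ k ∉ ({u} : Finset (Fin n)), s' k = s k := by
    intro k hk
    simp only [Finset.mem_singleton] at hk
    rw [hs', Function.update_of_ne hk]
  have hpres : ∀ a b : Fin n, a ≠ u → b ≠ u →
      ((NCGraph s').Adj a b ↔ (NCGraph s).Adj a b) := by
    intro a b ha hb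
    rw [ncadj, ncadj, hs', Function.update_of_ne ha, Function.update_of_ne hb]
  have hpres2 : ∀ b, b ≠ v → (NCGraph s).Adj u b → (NCGraph s').Adj u b := by
    intro b hbv h
    rw [ncadj] at h ⊢
    refine ⟨h.1, ?_⟩
    rcases h.2 with h' | h'
    · exact Or.inl (by rw [hsu]; exact Finset.mem_erase.2 ⟨hbv, h'⟩)
    · exact Or.inr (by rw [hs', Function.update_of_ne (Ne.symm h.1)]; exact h')
  have hpt : ∀ x, x ≠ v → ((NCGraph s').edist u x : ℝ≥0∞) ≤ ((NCGraph s).edist u x : ℝ≥0∞) := by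
    intro x hxv
    by_cases hxu : x = u
    · subst hxu; simp [SimpleGraph.edist_self]
    by_cases hadj : (NCGraph s).Adj u x
    · have h1 := edist_le_one_of_adj (hpres2 x hxv hadj)
      have h2 : 1 ≤ (NCGraph s).edist u x :=
        Order.one_le_iff_pos.2 (SimpleGraph.edist_pos_of_ne (fun h => hxu h.symm))
      exact (cast_le_one' h1).trans (one_le_cast' h2)
    · have h2 : (NCGraph s).edist u x = 2 :=
        le_antisymm (hdiam u x) (two_le_edist_of (fun h => hxu h.symm) hadj)
      obtain ⟨z0, hz01, hz02⟩ := exists_common_of_edist_eq_two h2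
      have hex : ∃ z', ((NCGraph s).Adj u z' ∧ (NCGraph s).Adj z' x) ∧ z' ≠ v := by
        by_contra hc
        push_neg at hc
        exact hno x ⟨hadj, hxu, ⟨z0, hz01, hz02⟩, fun z' h1' h2' => hc z' ⟨h1', h2'⟩⟩
      obtain ⟨z, ⟨hz1, hz2⟩, hzv⟩ := hex
      have hzu : z ≠ u := fun h => (NCGraph s).irrefl (h ▸ hz1)
      have e1 : (NCGraph s').Adj u z := hpres2 z hzv hz1
      have e2 : (NCGraph s').Adj z x := (hpres z x hzu hxu).2 hz2
      calc ((NCGraph s').edist u x : ℝ≥0∞) ≤ 2 := cast_le_two' (edist_le_two_of_common e1 e2)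
      _ = ((NCGraph s).edist u x : ℝ≥0∞) := by rw [h2]; simp
  have hbv : ((NCGraph s').edist u v : ℝ≥0∞) ≤ ((NCGraph s).edist u v : ℝ≥0∞) + 1 := by
    have hwne : w ≠ v := hwv.ne
    have hwu : w ≠ u := Ne.symm huw.ne
    have e1 : (NCGraph s').Adj u w := hpres2 w hwne huw
    have e2 : (NCGraph s').Adj w v := (hpres w v hwu (Ne.symm huv_ne)).2 hwv
    have h1 : ((NCGraph s').edist u v : ℝ≥0∞) ≤ 2 :=
      cast_le_two' (edist_le_two_of_common e1 e2)
    have h2 : (1:ℝ≥0∞) ≤ ((NCGraph s).edist u v : ℝ≥0∞) :=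
      one_le_cast' (Order.one_le_iff_pos.2 (SimpleGraph.edist_pos_of_ne huv_ne))
    calc ((NCGraph s').edist u v : ℝ≥0∞) ≤ 2 := h1
    _ = 1 + 1 := by norm_num
    _ ≤ ((NCGraph s).edist u v : ℝ≥0∞) + 1 := add_le_add_left h2 _
  have hsum : dCost s' u ≤ dCost s u + 1 := by
    rw [dCost, dCost]
    exact sum_le_sum_add1 hpt hbv
  have hcadd : ((s' u).card : ℝ≥0∞) + 1 = ((s u).card : ℝ≥0∞) := by
    rw [hsu]
    exact_mod_cast congrArg (Nat.cast (R := ℝ≥0∞)) (Finset.card_erase_add_one hbuy)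
  have hfinal : cost α s' u + ENNReal.ofReal α ≤ cost α s u + 1 := by
    calc cost α s' u + ENNReal.ofReal α
        = ENNReal.ofReal α * (((s' u).card : ℝ≥0∞) + 1) + dCost s' u := by rw [cost]; ring
    _ = ENNReal.ofReal α * (s u).card + dCost s' u := by rw [hcadd]
    _ ≤ ENNReal.ofReal α * (s u).card + (dCost s u + 1) := add_le_add_right hsum _
    _ = cost α s u + 1 := by rw [cost]; ring
  have hlt := improve_lt hfinal (one_lt_ofReal hα1) (cost_ne_top (hfin u)) ENNReal.ofReal_ne_top
  obtain ⟨k, hk, hle⟩ := hse {u} s' ⟨u, by simp⟩ hVal hout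
  simp only [Finset.mem_singleton] at hk
  subst hk
  exact absurd hle (not_le.2 hlt)

end F

section G
variable {n : ℕ} {α : ℝ} {s : Profile n}

lemma cyc3 (hα2 : α < 2) (hv : Valid s) (hse : IsStrongEq α s)
    (hfin : ∀ i j : Fin n, (NCGraph s).edist i j ≠ ⊤)
    {a b c : Fin n} (hab : a ≠ b) (hac : a ≠ c) (hbc : b ≠ c)
    (nab : ¬ (NCGraph s).Adj a b) (nbc : ¬ (NCGraph s).Adj b c) (nca : ¬ (NCGraph s).Adj c a) : False := by
  classical
  set F : Fin n → Fin n := fun x => if x = a then b else if x = b then c else a with hF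
  have ea : F a = b := by simp [hF]
  have eb : F b = c := by simp [hF, Ne.symm hab]
  have ec : F c = a := by simp [hF, Ne.symm hac, Ne.symm hbc]
  refine cycle_dev hα2 hv hse hfin {a, b, c} ⟨a, by simp⟩ F ?_ ?_
  · intro i hi
    simp only [Finset.mem_insert, Finset.mem_singleton] at hi
    rcases hi with rfl | rfl | rfl
    · rw [ea]; exact ⟨Ne.symm hab, nab⟩
    · rw [eb]; exact ⟨Ne.symm hbc, nbc⟩
    · rw [ec]; exact ⟨hac, nca⟩
  · intro i hi
    simp only [Finset.mem_insert, Finset.mem_singleton] at hi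
    rcases hi with rfl | rfl | rfl
    · exact ⟨c, by simp, ec, by rw [ea]; exact Ne.symm hbc⟩
    · exact ⟨a, by simp, ea, by rw [eb]; exact hac⟩
    · exact ⟨b, by simp, eb, by rw [ec]; exact Ne.symm hab⟩

lemma cyc4 (hα2 : α < 2) (hv : Valid s) (hse : IsStrongEq α s)
    (hfin : ∀ i j : Fin n, (NCGraph s).edist i j ≠ ⊤)
    {a b c d : Fin n} (hab : a ≠ b) (hac : a ≠ c) (had : a ≠ d) (hbc : b ≠ c) (hbd : b ≠ d) (hcd : c ≠ d)
    (nab : ¬ (NCGraph s).Adj a b) (nbc : ¬ (NCGraph s).Adj b c) (ncd : ¬ (NCGraph s).Adj c d) (nda : ¬ (NCGraph s).Adj d a) : False := by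
  classical
  set F : Fin n → Fin n := fun x => if x = a then b else if x = b then c else if x = c then d else a with hF
  have ea : F a = b := by simp [hF]
  have eb : F b = c := by simp [hF, Ne.symm hab]
  have ec : F c = d := by simp [hF, Ne.symm hac, Ne.symm hbc]
  have ed : F d = a := by simp [hF, Ne.symm had, Ne.symm hbd, Ne.symm hcd]
  refine cycle_dev hα2 hv hse hfin {a, b, c, d} ⟨a, by simp⟩ F ?_ ?_
  · intro i hi
    simp only [Finset.mem_insert, Finset.mem_singleton] at hi
    rcases hi with rfl | rfl | rfl | rfl
    · rw [ea]; exact ⟨Ne.symm hab, nab⟩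
    · rw [eb]; exact ⟨Ne.symm hbc, nbc⟩
    · rw [ec]; exact ⟨Ne.symm hcd, ncd⟩
    · rw [ed]; exact ⟨had, nda⟩
  · intro i hi
    simp only [Finset.mem_insert, Finset.mem_singleton] at hi
    rcases hi with rfl | rfl | rfl | rfl
    · exact ⟨d, by simp, ed, by rw [ea]; exact Ne.symm hbd⟩
    · exact ⟨a, by simp, ea, by rw [eb]; exact hac⟩
    · exact ⟨b, by simp, eb, by rw [ec]; exact hbd⟩
    · exact ⟨c, by simp, ec, by rw [ed]; exact Ne.symm hac⟩

lemma cyc5 (hα2 : α < 2) (hv : Valid s) (hse : IsStrongEq α s)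
    (hfin : ∀ i j : Fin n, (NCGraph s).edist i j ≠ ⊤)
    {a b c d e : Fin n} (hab : a ≠ b) (hac : a ≠ c) (had : a ≠ d) (hae : a ≠ e) (hbc : b ≠ c) (hbd : b ≠ d) (hbe : b ≠ e) (hcd : c ≠ d) (hce : c ≠ e) (hde : d ≠ e)
    (nab : ¬ (NCGraph s).Adj a b) (nbc : ¬ (NCGraph s).Adj b c) (ncd : ¬ (NCGraph s).Adj c d) (nde : ¬ (NCGraph s).Adj d e) (nea : ¬ (NCGraph s).Adj e a) : False := by
  classical
  set F : Fin n → Fin n := fun x => if x = a then b else if x = b then c else if x = c then d else if x = d then e else a with hF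
  have ea : F a = b := by simp [hF]
  have eb : F b = c := by simp [hF, Ne.symm hab]
  have ec : F c = d := by simp [hF, Ne.symm hac, Ne.symm hbc]
  have ed : F d = e := by simp [hF, Ne.symm had, Ne.symm hbd, Ne.symm hcd]
  have ee : F e = a := by simp [hF, Ne.symm hae, Ne.symm hbe, Ne.symm hce, Ne.symm hde]
  refine cycle_dev hα2 hv hse hfin {a, b, c, d, e} ⟨a, by simp⟩ F ?_ ?_
  · intro i hi
    simp only [Finset.mem_insert, Finset.mem_singleton] at hi
    rcases hi with rfl | rfl | rfl | rfl | rfl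
    · rw [ea]; exact ⟨Ne.symm hab, nab⟩
    · rw [eb]; exact ⟨Ne.symm hbc, nbc⟩
    · rw [ec]; exact ⟨Ne.symm hcd, ncd⟩
    · rw [ed]; exact ⟨Ne.symm hde, nde⟩
    · rw [ee]; exact ⟨hae, nea⟩
  · intro i hi
    simp only [Finset.mem_insert, Finset.mem_singleton] at hi
    rcases hi with rfl | rfl | rfl | rfl | rfl
    · exact ⟨e, by simp, ee, by rw [ea]; exact Ne.symm hbe⟩
    · exact ⟨a, by simp, ea, by rw [eb]; exact hac⟩
    · exact ⟨b, by simp, eb, by rw [ec]; exact hbd⟩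
    · exact ⟨c, by simp, ec, by rw [ed]; exact hce⟩
    · exact ⟨d, by simp, ed, by rw [ee]; exact Ne.symm had⟩

lemma cyc6 (hα2 : α < 2) (hv : Valid s) (hse : IsStrongEq α s)
    (hfin : ∀ i j : Fin n, (NCGraph s).edist i j ≠ ⊤)
    {a b c d e f : Fin n} (hab : a ≠ b) (hac : a ≠ c) (had : a ≠ d) (hae : a ≠ e) (haf : a ≠ f) (hbc : b ≠ c) (hbd : b ≠ d) (hbe : b ≠ e) (hbf : b ≠ f) (hcd : c ≠ d) (hce : c ≠ e) (hcf : c ≠ f) (hde : d ≠ e) (hdf : d ≠ f) (hef : e ≠ f)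
    (nab : ¬ (NCGraph s).Adj a b) (nbc : ¬ (NCGraph s).Adj b c) (ncd : ¬ (NCGraph s).Adj c d) (nde : ¬ (NCGraph s).Adj d e) (nef : ¬ (NCGraph s).Adj e f) (nfa : ¬ (NCGraph s).Adj f a) : False := by
  classical
  set F : Fin n → Fin n := fun x => if x = a then b else if x = b then c else if x = c then d else if x = d then e else if x = e then f else a with hF
  have ea : F a = b := by simp [hF]
  have eb : F b = c := by simp [hF, Ne.symm hab]
  have ec : F c = d := by simp [hF, Ne.symm hac, Ne.symm hbc]
  have ed : F d = e := by simp [hF, Ne.symm had, Ne.symm hbd, Ne.symm hcd]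
  have ee : F e = f := by simp [hF, Ne.symm hae, Ne.symm hbe, Ne.symm hce, Ne.symm hde]
  have ef : F f = a := by simp [hF, Ne.symm haf, Ne.symm hbf, Ne.symm hcf, Ne.symm hdf, Ne.symm hef]
  refine cycle_dev hα2 hv hse hfin {a, b, c, d, e, f} ⟨a, by simp⟩ F ?_ ?_
  · intro i hi
    simp only [Finset.mem_insert, Finset.mem_singleton] at hi
    rcases hi with rfl | rfl | rfl | rfl | rfl | rfl
    · rw [ea]; exact ⟨Ne.symm hab, nab⟩
    · rw [eb]; exact ⟨Ne.symm hbc, nbc⟩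
    · rw [ec]; exact ⟨Ne.symm hcd, ncd⟩
    · rw [ed]; exact ⟨Ne.symm hde, nde⟩
    · rw [ee]; exact ⟨Ne.symm hef, nef⟩
    · rw [ef]; exact ⟨haf, nfa⟩
  · intro i hi
    simp only [Finset.mem_insert, Finset.mem_singleton] at hi
    rcases hi with rfl | rfl | rfl | rfl | rfl | rfl
    · exact ⟨f, by simp, ef, by rw [ea]; exact Ne.symm hbf⟩
    · exact ⟨a, by simp, ea, by rw [eb]; exact hac⟩
    · exact ⟨b, by simp, eb, by rw [ec]; exact hbd⟩
    · exact ⟨c, by simp, ec, by rw [ed]; exact hce⟩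
    · exact ⟨d, by simp, ed, by rw [ee]; exact hdf⟩
    · exact ⟨e, by simp, ee, by rw [ef]; exact Ne.symm hae⟩

end G

section H
variable {n : ℕ} {α : ℝ} {s : Profile n}

lemma tri_of_six (v0 w1 w2 w3 w4 w5 : Fin n)
    (h01 : v0 ≠ w1) (h02 : v0 ≠ w2) (h03 : v0 ≠ w3) (h04 : v0 ≠ w4) (h05 : v0 ≠ w5)
    (h12 : w1 ≠ w2) (h13 : w1 ≠ w3) (h14 : w1 ≠ w4) (h15 : w1 ≠ w5)
    (h23 : w2 ≠ w3) (h24 : w2 ≠ w4) (h25 : w2 ≠ w5)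
    (h34 : w3 ≠ w4) (h35 : w3 ≠ w5) (h45 : w4 ≠ w5)
    (hno3 : ∀ a b c : Fin n, a ≠ b → b ≠ c → a ≠ c →
      ¬(NCGraph s).Adj a b → ¬(NCGraph s).Adj b c → ¬(NCGraph s).Adj a c → False) :
    ∃ a b c : Fin n, (NCGraph s).Adj a b ∧ (NCGraph s).Adj b c ∧ (NCGraph s).Adj a c := by
  classical
  set S : Finset (Fin n) := {w1, w2, w3, w4, w5} with hS
  have hcard : S.card = 5 := by
    rw [hS]
    rw [Finset.card_insert_of_notMem (by simp [h12, h13, h14, h15]),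
      Finset.card_insert_of_notMem (by simp [h23, h24, h25]),
      Finset.card_insert_of_notMem (by simp [h34, h35]),
      Finset.card_insert_of_notMem (by simp [h45]), Finset.card_singleton]
  have hS0 : ∀ x ∈ S, v0 ≠ x := by
    intro x hx
    rw [hS] at hx
    simp only [Finset.mem_insert, Finset.mem_singleton] at hx
    rcases hx with rfl | rfl | rfl | rfl | rfl <;> assumption
  have hsum : (S.filter (fun x => (NCGraph s).Adj v0 x)).card
      + (S.filter (fun x => ¬ (NCGraph s).Adj v0 x)).card = 5 := by
    rw [Finset.card_filter_add_card_filter_not]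
    exact hcard
  rcases le_or_gt 3 (S.filter (fun x => (NCGraph s).Adj v0 x)).card with h3 | h3
  · obtain ⟨T, hTsub, hT3⟩ := Finset.exists_subset_card_eq h3
    obtain ⟨x, y, z, hxy, hxz, hyz, rfl⟩ := Finset.card_eq_three.1 hT3
    have hx : (NCGraph s).Adj v0 x := (Finset.mem_filter.1 (hTsub (by simp))).2
    have hy : (NCGraph s).Adj v0 y := (Finset.mem_filter.1 (hTsub (by simp))).2
    have hz : (NCGraph s).Adj v0 z := (Finset.mem_filter.1 (hTsub (by simp))).2
    by_cases axy : (NCGraph s).Adj x y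
    · exact ⟨v0, x, y, hx, axy, hy⟩
    by_cases axz : (NCGraph s).Adj x z
    · exact ⟨v0, x, z, hx, axz, hz⟩
    by_cases ayz : (NCGraph s).Adj y z
    · exact ⟨v0, y, z, hy, ayz, hz⟩
    exact (hno3 x y z hxy hyz hxz axy ayz axz).elim
  · have h3n : 3 ≤ (S.filter (fun x => ¬(NCGraph s).Adj v0 x)).card := by omega
    obtain ⟨T, hTsub, hT3⟩ := Finset.exists_subset_card_eq h3n
    obtain ⟨x, y, z, hxy, hxz, hyz, rfl⟩ := Finset.card_eq_three.1 hT3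
    have hx := Finset.mem_filter.1 (hTsub (by simp : x ∈ ({x,y,z} : Finset (Fin n))))
    have hy := Finset.mem_filter.1 (hTsub (by simp : y ∈ ({x,y,z} : Finset (Fin n))))
    have hz := Finset.mem_filter.1 (hTsub (by simp : z ∈ ({x,y,z} : Finset (Fin n))))
    have haxy : (NCGraph s).Adj x y := by
      by_contra hc
      exact hno3 v0 x y (hS0 x hx.1) hxy (hS0 y hy.1) hx.2 hc hy.2
    have haxz : (NCGraph s).Adj x z := by
      by_contra hc
      exact hno3 v0 x z (hS0 x hx.1) hxz (hS0 z hz.1) hx.2 hc hz.2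
    have hayz : (NCGraph s).Adj y z := by
      by_contra hc
      exact hno3 v0 y z (hS0 y hy.1) hyz (hS0 z hz.1) hy.2 hc hz.2
    exact ⟨x, y, z, haxy, hayz, haxz⟩

end H

section P
variable {α : ℝ} {s : Profile 5}

lemma pentagon (hα2 : α < 2) (hv : Valid s) (hse : IsStrongEq α s)
    (hfin : ∀ i j : Fin 5, (NCGraph s).edist i j ≠ ⊤)
    (hnotri : ∀ a b c : Fin 5, (NCGraph s).Adj a b → (NCGraph s).Adj b c →
      (NCGraph s).Adj a c → False) : False := by
  classical
  have hno3 : ∀ a b c : Fin 5, a ≠ b → b ≠ c → a ≠ c →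
      ¬(NCGraph s).Adj a b → ¬(NCGraph s).Adj b c → ¬(NCGraph s).Adj a c → False := by
    intro a b c hab hbc hac n1 n2 n3
    exact cyc3 hα2 hv hse hfin hab hac hbc n1 n2 (fun h => n3 h.symm)
  set H : Fin 5 → Fin 5 → Prop := fun x y => x ≠ y ∧ ¬ (NCGraph s).Adj x y with hH
  have Hsym : ∀ x y, H x y → H y x := fun x y h => ⟨Ne.symm h.1, fun a => h.2 a.symm⟩
  have noHtri : ∀ x y z, H x y → H y z → H x z → False := fun x y z h1 h2 h3 =>
    hno3 x y z h1.1 h2.1 h3.1 h1.2 h2.2 h3.2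
  have Hind : ∀ x y z : Fin 5, x ≠ y → y ≠ z → x ≠ z → H x y ∨ H y z ∨ H x z := by
    intro x y z hxy hyz hxz
    by_cases a1 : (NCGraph s).Adj x y
    · by_cases a2 : (NCGraph s).Adj y z
      · by_cases a3 : (NCGraph s).Adj x z
        · exact (hnotri x y z a1 a2 a3).elim
        · exact Or.inr (Or.inr ⟨hxz, a3⟩)
      · exact Or.inr (Or.inl ⟨hyz, a2⟩)
    · exact Or.inl ⟨hxy, a1⟩
  have hdeg : ∀ x p q r : Fin 5, p ≠ q → p ≠ r → q ≠ r →
      H x p → H x q → H x r → False := by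
    intro x p q r hpq hpr hqr h1 h2 h3
    rcases Hind p q r hpq hqr hpr with h | h | h
    · exact noHtri x p q h1 h h2
    · exact noHtri x q r h2 h h3
    · exact noHtri x p r h1 h h3
  set S : Finset (Fin 5) := {1, 2, 3, 4} with hS
  have hS0 : ∀ x ∈ S, x ≠ (0 : Fin 5) := by decide
  set T := S.filter (fun x => ¬ (NCGraph s).Adj 0 x) with hT
  have hT2 : 2 ≤ T.card := by
    by_contra hc
    push_neg at hc
    have hsum : (S.filter (fun x => (NCGraph s).Adj 0 x)).card + T.card = 4 := by
      rw [hT, Finset.card_filter_add_card_filter_not]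
      decide
    have h3 : 3 ≤ (S.filter (fun x => (NCGraph s).Adj 0 x)).card := by omega
    obtain ⟨T3, hT3sub, hT3⟩ := Finset.exists_subset_card_eq h3
    obtain ⟨x, y, z, hxy, hxz, hyz, rfl⟩ := Finset.card_eq_three.1 hT3
    have hx : (NCGraph s).Adj 0 x := (Finset.mem_filter.1 (hT3sub (by simp))).2
    have hy : (NCGraph s).Adj 0 y := (Finset.mem_filter.1 (hT3sub (by simp))).2
    have hz : (NCGraph s).Adj 0 z := (Finset.mem_filter.1 (hT3sub (by simp))).2
    by_cases axy : (NCGraph s).Adj x y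
    · exact hnotri 0 x y hx axy hy
    by_cases axz : (NCGraph s).Adj x z
    · exact hnotri 0 x z hx axz hz
    by_cases ayz : (NCGraph s).Adj y z
    · exact hnotri 0 y z hy ayz hz
    exact hno3 x y z hxy hyz hxz axy ayz axz
  obtain ⟨v1, hv1T, v4, hv4T, hne14⟩ := Finset.one_lt_card.1 (show 1 < T.card by omega)
  have hv1 : H 0 v1 := by
    have := Finset.mem_filter.1 hv1T
    exact ⟨Ne.symm (hS0 v1 this.1), this.2⟩
  have hv4 : H 0 v4 := by
    have := Finset.mem_filter.1 hv4T
    exact ⟨Ne.symm (hS0 v4 this.1), this.2⟩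
  have hcard3 : ({0, v1, v4} : Finset (Fin 5)).card = 3 := by
    rw [Finset.card_insert_of_notMem (by simp [hv1.1, hv4.1]),
      Finset.card_insert_of_notMem (by simp [hne14]), Finset.card_singleton]
  have hcardR : ((univ : Finset (Fin 5)) \ {0, v1, v4}).card = 2 := by
    rw [Finset.card_sdiff_of_subset (Finset.subset_univ _), hcard3]
    simp
  obtain ⟨x, y, hxy, hR⟩ := Finset.card_eq_two.1 hcardR
  have hxR : x ∈ (univ : Finset (Fin 5)) \ {0, v1, v4} := by rw [hR]; simp
  have hyR : y ∈ (univ : Finset (Fin 5)) \ {0, v1, v4} := by rw [hR]; simp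
  simp only [Finset.mem_sdiff, Finset.mem_insert, Finset.mem_singleton, Finset.mem_univ,
    true_and, not_or] at hxR hyR
  obtain ⟨hx0, hx1, hx4⟩ := hxR
  obtain ⟨hy0, hy1, hy4⟩ := hyR
  have hn0x : ¬ H 0 x := fun h =>
    hdeg 0 v1 v4 x hne14 (fun e => hx1 e.symm) (fun e => hx4 e.symm) hv1 hv4 h
  have hn0y : ¬ H 0 y := fun h =>
    hdeg 0 v1 v4 y hne14 (fun e => hy1 e.symm) (fun e => hy4 e.symm) hv1 hv4 h
  have hHxy : H x y := by
    rcases Hind x 0 y hx0 (Ne.symm hy0) hxy with h | h | h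
    · exact (hn0x (Hsym _ _ h)).elim
    · exact (hn0y h).elim
    · exact h
  have hnH14 : ¬ H v1 v4 := fun h => noHtri v1 0 v4 (Hsym _ _ hv1) hv4 h
  have hEx : H v1 x ∨ H v4 x := by
    rcases Hind v1 v4 x hne14 (Ne.symm hx4) (Ne.symm hx1) with h | h | h
    · exact (hnH14 h).elim
    · exact Or.inr h
    · exact Or.inl h
  have hEy : H v1 y ∨ H v4 y := by
    rcases Hind v1 v4 y hne14 (Ne.symm hy4) (Ne.symm hy1) with h | h | h
    · exact (hnH14 h).elim
    · exact Or.inr h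
    · exact Or.inl h
  have hnot1 : ¬ (H v1 x ∧ H v1 y) := fun ⟨p, q⟩ =>
    hdeg v1 0 x y (Ne.symm hx0) (Ne.symm hy0) hxy (Hsym _ _ hv1) p q
  have hnot4 : ¬ (H v4 x ∧ H v4 y) := fun ⟨p, q⟩ =>
    hdeg v4 0 x y (Ne.symm hx0) (Ne.symm hy0) hxy (Hsym _ _ hv4) p q
  rcases hEx with p1 | p1 <;> rcases hEy with p2 | p2
  · exact hnot1 ⟨p1, p2⟩
  · -- H v1 x, H v4 y : pentagon 0 v1 x y v4
    exact cyc5 hα2 hv hse hfin hv1.1 (Ne.symm hx0) (Ne.symm hy0) hv4.1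
      p1.1 (fun e => hy1 e.symm) hne14 hxy hx4 hy4
      hv1.2 p1.2 hHxy.2 (fun h => p2.2 h.symm) (fun h => hv4.2 h.symm)
  · -- H v1 y, H v4 x : pentagon 0 v1 y x v4
    exact cyc5 hα2 hv hse hfin hv1.1 (Ne.symm hy0) (Ne.symm hx0) hv4.1
      p2.1 (fun e => hx1 e.symm) hne14 (Ne.symm hxy) hy4 hx4
      hv1.2 p2.2 (fun h => hHxy.2 h.symm) (fun h => p1.2 h.symm) (fun h => hv4.2 h.symm)
  · exact hnot4 ⟨p1, p2⟩

end P

section T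
variable {n : ℕ} {α : ℝ} {s : Profile n}

/-- Unpacked witness facts. -/
lemma wit_unpack {u v w x : Fin n} (hW : Wit s u v x)
    (huv : (NCGraph s).Adj u v) (huw : (NCGraph s).Adj u w) (hwv : w ≠ v) :
    ¬(NCGraph s).Adj u x ∧ x ≠ u ∧ (NCGraph s).Adj v x ∧ ¬(NCGraph s).Adj w x ∧
      x ≠ v ∧ x ≠ w ∧ (∀ z, (NCGraph s).Adj u z → (NCGraph s).Adj z x → z = v) := by
  obtain ⟨hnux, hxu, ⟨z, hz1, hz2⟩, hP⟩ := hW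
  have hvx : (NCGraph s).Adj v x := by
    have := hP z hz1 hz2
    rwa [this] at hz2
  exact ⟨hnux, hxu, hvx, fun h => hwv (hP w huw h), fun h => hnux (by rw [h]; exact huv),
    fun h => hnux (by rw [h]; exact huw), hP⟩

lemma tri_cyclic (hα1 : 1 < α) (hα2 : α < 2) (hv : Valid s) (hse : IsStrongEq α s)
    (hfin : ∀ i j : Fin n, (NCGraph s).edist i j ≠ ⊤)
    (hdiam : ∀ i j : Fin n, (NCGraph s).edist i j ≤ 2)
    {a b c : Fin n} (hab : (NCGraph s).Adj a b) (hbc : (NCGraph s).Adj b c)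
    (hac : (NCGraph s).Adj a c)
    (m1 : b ∈ s a) (m2 : c ∈ s b) (m3 : a ∈ s c) : False := by
  obtain ⟨x1, hW1⟩ := witness_of_se hα1 hse hv hfin hdiam m1 hac hbc.symm
  obtain ⟨x2, hW2⟩ := witness_of_se hα1 hse hv hfin hdiam m2 hab.symm hac
  obtain ⟨x3, hW3⟩ := witness_of_se hα1 hse hv hfin hdiam m3 hbc.symm hab.symm
  obtain ⟨n1u, h1u, a1v, n1w, h1v, h1w, P1⟩ := wit_unpack hW1 hab hac (fun h => hbc.ne h.symm)
  obtain ⟨n2u, h2u, a2v, n2w, h2v, h2w, P2⟩ := wit_unpack hW2 hbc hab.symm hac.ne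
  obtain ⟨n3u, h3u, a3v, n3w, h3v, h3w, P3⟩ :=
    wit_unpack hW3 hac.symm hbc.symm (fun h => hab.ne h.symm)
  exact cyc6 hα2 hv hse hfin (a := a) (b := x1) (c := c) (d := x3) (e := b) (f := x2)
    (Ne.symm h1u) hac.ne a3v.ne hab.ne (Ne.symm h2w)
    h1w (fun h => n1u (by rw [h]; exact a3v)) (Ne.symm a1v.ne)
    (fun h => n2u (by rw [← h]; exact a1v))
    (Ne.symm h3u) (Ne.symm hbc.ne) a2v.ne
    h3w (fun h => n3u (by rw [h]; exact a2v))
    (Ne.symm h2u)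
    n1u (fun h => n1w h.symm) n3u (fun h => n3w h.symm) n2u (fun h => n2w h.symm)

lemma tri_two (hα1 : 1 < α) (hα2 : α < 2) (hv : Valid s) (hse : IsStrongEq α s)
    (hfin : ∀ i j : Fin n, (NCGraph s).edist i j ≠ ⊤)
    (hdiam : ∀ i j : Fin n, (NCGraph s).edist i j ≤ 2)
    {a b c : Fin n} (hab : (NCGraph s).Adj a b) (hbc : (NCGraph s).Adj b c)
    (hac : (NCGraph s).Adj a c)
    (m1 : a ∈ s c) (m2 : b ∈ s c) (m3 : b ∈ s a) : False := by
  -- y : witness for edge a→b (third vertex c)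
  obtain ⟨y, hWy⟩ := witness_of_se hα1 hse hv hfin hdiam m3 hac hbc.symm
  -- z : witness for edge c→a (third vertex b)
  obtain ⟨z, hWz⟩ := witness_of_se hα1 hse hv hfin hdiam m1 hbc.symm hab.symm
  -- y3 : witness for edge c→b (third vertex a)
  obtain ⟨y3, hWy3⟩ := witness_of_se hα1 hse hv hfin hdiam m2 hac.symm hab
  obtain ⟨nyu, hyu, ayv, nyw, hyv, hyw, Py⟩ := wit_unpack hWy hab hac (fun h => hbc.ne h.symm)
  obtain ⟨nzu, hzu, azv, nzw, hzv, hzw, Pz⟩ :=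
    wit_unpack hWz hac.symm hbc.symm (fun h => hab.ne h.symm)
  obtain ⟨n3u, h3u, a3v, n3w, h3v, h3w, P3⟩ := wit_unpack hWy3 hbc.symm hac.symm hab.ne
  -- facts: y : ¬Adj a y, Adj b y, ¬Adj c y ; z : ¬Adj c z, Adj a z, ¬Adj b z ;
  -- y3 : ¬Adj c y3, Adj b y3, ¬Adj a y3
  by_cases hyy3 : y = y3
  · -- y = y3
    subst hyy3
    have hyz : y ≠ z := fun h => nyu (by rw [h]; exact azv)
    by_cases hadjyz : (NCGraph s).Adj y z
    · -- P y with z : Adj a z → Adj z y → z = b, but z ≠ b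
      have hzb : z = b := Py z azv hadjyz.symm
      exact nzu (by rw [hzb]; exact hbc.symm)
    · -- complement triangle y, z, c
      exact cyc3 hα2 hv hse hfin hyz hyw hzu hadjyz (fun h => nzu h.symm) nyw
  · -- y ≠ y3 : complement 4-cycle a, y, c, y3
    exact cyc4 hα2 hv hse hfin (a := a) (b := y) (c := c) (d := y3)
      (Ne.symm hyu) hac.ne (Ne.symm h3w) hyw hyy3 (Ne.symm h3u)
      nyu (fun h => nyw h.symm) n3u (fun h => n3w h.symm)

end T

/-- For `α ∈ (1,2)` and `n ≥ 5`, no strong equilibrium exists. -/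
theorem stmt9 {n : ℕ} (hn : 5 ≤ n) (α : ℝ) (hα1 : 1 < α) (hα2 : α < 2)
    (s : Profile n) (hv : Valid s) : ¬IsStrongEq α s := by
  intro hse
  classical
  have hfin := fin_of_se hse hv
  have hdiam := diam_of_se hα2 hse hv hfin
  have hno3 : ∀ a b c : Fin n, a ≠ b → b ≠ c → a ≠ c → ¬(NCGraph s).Adj a b →
      ¬(NCGraph s).Adj b c → ¬(NCGraph s).Adj a c → False :=
    fun a b c hab hbc hac n1 n2 n3 =>
      cyc3 hα2 hv hse hfin hab hac hbc n1 n2 (fun h => n3 h.symm)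
  have hex : ∃ a b c : Fin n, (NCGraph s).Adj a b ∧ (NCGraph s).Adj b c ∧
      (NCGraph s).Adj a c := by
    rcases le_or_gt 6 n with h6 | h6
    · exact tri_of_six ⟨0, by omega⟩ ⟨1, by omega⟩ ⟨2, by omega⟩ ⟨3, by omega⟩ ⟨4, by omega⟩
        ⟨5, by omega⟩
        (Fin.ne_of_val_ne (by simp)) (Fin.ne_of_val_ne (by simp))
        (Fin.ne_of_val_ne (by simp)) (Fin.ne_of_val_ne (by simp))
        (Fin.ne_of_val_ne (by simp)) (Fin.ne_of_val_ne (by simp))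
        (Fin.ne_of_val_ne (by simp)) (Fin.ne_of_val_ne (by simp))
        (Fin.ne_of_val_ne (by simp)) (Fin.ne_of_val_ne (by simp))
        (Fin.ne_of_val_ne (by simp)) (Fin.ne_of_val_ne (by simp))
        (Fin.ne_of_val_ne (by simp)) (Fin.ne_of_val_ne (by simp))
        (Fin.ne_of_val_ne (by simp)) hno3
    · have h5 : n = 5 := by omega
      subst h5
      by_contra hc
      exact pentagon hα2 hv hse hfin (fun a b c h1 h2 h3 => hc ⟨a, b, c, h1, h2, h3⟩)
  obtain ⟨a, b, c, hab, hbc, hac⟩ := hex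
  have e1 := ((ncadj s).1 hab).2
  have e2 := ((ncadj s).1 hbc).2
  have e3 := ((ncadj s).1 hac).2
  rcases e1 with p1 | q1 <;> rcases e2 with p2 | q2 <;> rcases e3 with p3 | q3
  · exact tri_two hα1 hα2 hv hse hfin hdiam hbc hac.symm hab.symm p1 p3 p2
  · exact tri_cyclic hα1 hα2 hv hse hfin hdiam hab hbc hac p1 p2 q3
  · exact tri_two hα1 hα2 hv hse hfin hdiam hbc.symm hab.symm hac.symm p3 p1 q2
  · exact tri_two hα1 hα2 hv hse hfin hdiam hab hbc hac q3 q2 p1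
  · exact tri_two hα1 hα2 hv hse hfin hdiam hac hbc.symm hab q1 p2 p3
  · exact tri_two hα1 hα2 hv hse hfin hdiam hac.symm hab hbc.symm p2 q1 q3
  · exact tri_cyclic hα1 hα2 hv hse hfin hdiam hac hbc.symm hab p3 q2 q1
  · exact tri_two hα1 hα2 hv hse hfin hdiam hab.symm hac hbc q2 q3 q1
end
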